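/- For a cycle scenario R, there exists an optimal ride π with cw(π) ≤ 3n and with both cw(π) mod n and acw(π) mod n belonging to V_C ∪ {s₀,t₀}. -/

import Mathlib

namespace RideSharing

/-- A ride in a graph with adjacency `adj`: a nonempty sequence of nodes where
consecutive nodes are adjacent. -/
def IsRide (adj : ℕ → ℕ → Prop) (π : List ℕ) : Prop :=
  π ≠ [] ∧ π.Chain' adj

/-- The cost of a ride: sum of the weights of traversed edges. -/
def cost (w : ℕ → ℕ → ℚ) : List ℕ → ℚ
  | [] => 0
  | [_] => 0
  | a :: b :: rest => w a b + cost w (b :: rest)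

/-- A ride satisfies a request `(s,t)` if `s` occurs at a time step weakly before
an occurrence of `t`. -/
def Satisfies (π : List ℕ) (s t : ℕ) : Prop :=
  ∃ i j : ℕ, i ≤ j ∧ π[i]? = some s ∧ π[j]? = some t

/-- `Pre π' π` : `π'` is obtained from `π` by (repeatedly) removing a contiguous
subsequence of nodes (the relation `π' ⪯ π` of the paper, stated with 0-based indices:
`π[1,i] , π[i',len]` becomes `π.take (i+1) ++ π.drop i'`). -/
inductive Pre : List ℕ → List ℕ → Prop
  | refl (π : List ℕ) : Pre π π
  | step (π' π : List ℕ) (i i' : ℕ) :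
      i < i' → i' < π.length →
      (π[i + 1]? = π[i']? ∨ π[i]? = π[i' - 1]?) →
      Pre π' (π.take (i + 1) ++ π.drop i') → Pre π' π

/-- A ride-sharing scenario. -/
structure Scenario where
  adj : ℕ → ℕ → Prop
  w : ℕ → ℕ → ℚ
  s0 : ℕ
  t0 : ℕ
  C : Finset (ℕ × ℕ)

def Feasible (R : Scenario) (π : List ℕ) : Prop :=
  IsRide R.adj π ∧ π.head? = some R.s0 ∧ π.getLast? = some R.t0 ∧
    ∀ r ∈ R.C, Satisfies π r.1 r.2

def Optimal (R : Scenario) (π : List ℕ) : Prop :=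
  Feasible R π ∧ ∀ π', Feasible R π' → cost R.w π ≤ cost R.w π'

/-- The set `V_C` of endpoints of requests. -/
def VC (C : Finset (ℕ × ℕ)) : Finset ℕ := C.image Prod.fst ∪ C.image Prod.snd

/-- The path graph on `{1,…,n}`. -/
def pathAdj (n : ℕ) (a b : ℕ) : Prop :=
  (b = a + 1 ∨ a = b + 1) ∧ 1 ≤ a ∧ a ≤ n ∧ 1 ≤ b ∧ b ≤ n

/-- The monotone segment of the path from `x` to `y`. -/
def seg (x y : ℕ) : List ℕ :=
  if x ≤ y then (List.range (y - x + 1)).map (fun k => x + k)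
  else (List.range (x - y + 1)).map (fun k => x - k)

/-- The ride through a list of waypoints, concatenating monotone segments. -/
def rideThrough : List ℕ → List ℕ
  | [] => []
  | [x] => [x]
  | x :: y :: rest => seg x y ++ (rideThrough (y :: rest)).tail

/-- Concatenation of rides (`π ↦ π'`), inserting the monotone connecting segment
if the endpoints differ. -/
def rconcat (a b : List ℕ) : List ℕ :=
  a ++ (seg (a.getLastD 0) (b.headD 0)).tail ++ b.tail


/-- The cycle graph on `{1,…,n}`. -/
def cycAdj (n : ℕ) (a b : ℕ) : Prop :=
  (b = a + 1 ∨ a = b + 1 ∨ (a = n ∧ b = 1) ∨ (a = 1 ∧ b = n)) ∧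
    1 ≤ a ∧ a ≤ n ∧ 1 ≤ b ∧ b ≤ n

/-- Auxiliary computation of the winding numbers `ℓ_π`. -/
def ellAux (n : ℕ) : ℕ → ℤ → List ℕ → List ℤ
  | _, _, [] => []
  | prev, cur, x :: xs =>
    let c : ℤ := if prev = n ∧ x = 1 then cur + 1
      else if prev = 1 ∧ x = n then cur - 1 else cur
    c :: ellAux n x c xs

/-- The list of winding numbers `ℓ_π(1),…,ℓ_π(len π)` (with `ℓ_π(1) = 0`). -/
def ellList (n : ℕ) : List ℕ → List ℤ
  | [] => []
  | x :: xs => 0 :: ellAux n x 0 xs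

/-- The unrolled ride `τ_π(i) = π_i + (ℓ_π(i) − min_j ℓ_π(j))·n`. -/
def tauList (n : ℕ) (π : List ℕ) : List ℤ :=
  ((π.zip (ellList n π)).map
    (fun p => (p.1 : ℤ) + (p.2 - (ellList n π).foldr min 0) * n))

/-- `cw(π)`: maximum of `τ_π`. -/
def cw (n : ℕ) (π : List ℕ) : ℤ :=
  (tauList n π).foldr max ((tauList n π).headD 0)

/-- `acw(π)`: minimum of `τ_π`. -/
def acw (n : ℕ) (π : List ℕ) : ℤ :=
  (tauList n π).foldr min ((tauList n π).headD 0)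

/-- First time step at which `τ_π` attains `acw(π)`. -/
def acwIdx (n : ℕ) (π : List ℕ) : ℕ := (tauList n π).idxOf (acw n π)

/-- First time step at which `τ_π` attains `cw(π)`. -/
def cwIdx (n : ℕ) (π : List ℕ) : ℕ := (tauList n π).idxOf (cw n π)

/-- `mod n` with representatives in `{1,…,n}`, for natural numbers. -/
def mod1 (n v : ℕ) : ℕ := (v - 1) % n + 1

/-- `mod n` with representatives in `{1,…,n}`, for integers. -/
def mod1Z (n : ℕ) (x : ℤ) : ℕ := ((x - 1) % (n : ℤ)).toNat + 1

/-- The weight function of the unrolled path `G°` on `{1,…,3n}`. -/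
def wPath (n : ℕ) (w : ℕ → ℕ → ℚ) (a b : ℕ) : ℚ := w (mod1 n a) (mod1 n b)

/-- `V°_{α,β}`: nodes of `{α,…,β}` whose residue mod `n` is uniquely represented
in `{α,…,β}`. -/
def Vab (n  α β : ℕ) : Finset ℕ :=
  (Finset.Icc α β).filter (fun v =>
    ∀ v' ∈ Finset.Icc α β, mod1 n v' = mod1 n v → v' = v)

/-- `C°_{α,β}`: the requests of `C` lifted to uniquely represented nodes of
`{α,…,β}`. -/
def Cab (n : ℕ) (C : Finset (ℕ × ℕ)) (α β : ℕ) : Finset (ℕ × ℕ) :=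
  ((Finset.Icc α β) ×ˢ (Finset.Icc α β)).filter (fun p =>
    (mod1 n p.1, mod1 n p.2) ∈ C ∧ p.1 ∈ Vab n α β ∧ p.2 ∈ Vab n α β)






/-! ### generic fold lemmas -/

lemma le_foldr_max (l : List ℤ) (b : ℤ) : b ≤ l.foldr max b ∧ ∀ x ∈ l, x ≤ l.foldr max b := by
  induction l with
  | nil => simp
  | cons a l ih =>
    refine ⟨le_trans ih.1 ?_, ?_⟩
    · simp [List.foldr_cons, le_max_right]
    · intro x hx
      rcases List.mem_cons.1 hx with h | h
      · simp [h, List.foldr_cons, le_max_left]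
      · exact le_trans (ih.2 x h) (by simp [List.foldr_cons, le_max_right])

lemma foldr_max_mem (l : List ℤ) (b : ℤ) : l.foldr max b = b ∨ l.foldr max b ∈ l := by
  induction l with
  | nil => simp
  | cons a l ih =>
    rcases max_choice a (l.foldr max b) with h | h
    · right; simp [List.foldr_cons, h]
    · rcases ih with h' | h'
      · left; rw [List.foldr_cons, h, h']
      · right; simp only [List.foldr_cons, h]; exact List.mem_cons_of_mem _ h'

lemma foldr_min_le (l : List ℤ) (b : ℤ) : l.foldr min b ≤ b ∧ ∀ x ∈ l, l.foldr min b ≤ x := by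
  induction l with
  | nil => simp
  | cons a l ih =>
    refine ⟨le_trans ?_ ih.1, ?_⟩
    · simp [List.foldr_cons, min_le_right]
    · intro x hx
      rcases List.mem_cons.1 hx with h | h
      · simp [h, List.foldr_cons, min_le_left]
      · exact le_trans (by simp [List.foldr_cons, min_le_right]) (ih.2 x h)

lemma foldr_min_mem (l : List ℤ) (b : ℤ) : l.foldr min b = b ∨ l.foldr min b ∈ l := by
  induction l with
  | nil => simp
  | cons a l ih =>
    rcases min_choice a (l.foldr min b) with h | h
    · right; simp [List.foldr_cons, h]
    · rcases ih with h' | h'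
      · left; rw [List.foldr_cons, h, h']
      · right; simp only [List.foldr_cons, h]; exact List.mem_cons_of_mem _ h'

/-! ### cost lemmas -/

lemma cost_eq_sum (w : ℕ → ℕ → ℚ) (l : List ℕ) :
    cost w l = ∑ i ∈ Finset.range (l.length - 1), w (l.getD i 0) (l.getD (i+1) 0) := by
  induction l with
  | nil => simp [cost]
  | cons a l ih =>
    cases l with
    | nil => simp [cost]
    | cons b t =>
      rw [cost]
      rw [ih]
      have : (a :: b :: t).length - 1 = ((b :: t).length - 1) + 1 := by simp
      rw [this, Finset.sum_range_succ']
      simp only [List.getD_cons_succ, List.getD_cons_zero]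
      ring

lemma cost_append_cons (w : ℕ → ℕ → ℚ) (A : List ℕ) (x : ℕ) (l : List ℕ) :
    cost w (A ++ x :: l) = cost w (A ++ [x]) + cost w (x :: l) := by
  induction A with
  | nil => simp [cost]
  | cons a A ih =>
    cases A with
    | nil =>
      cases l with
      | nil => simp [cost]
      | cons y l' => simp [cost, add_assoc]
    | cons a' A' =>
      have h1 : (a :: a' :: A') ++ x :: l = a :: ((a' :: A') ++ x :: l) := by simp
      have h2 : (a :: a' :: A') ++ [x] = a :: ((a' :: A') ++ [x]) := by simp
      rw [h1, h2]
      have e1 : ((a' :: A') ++ x :: l) = a' :: (A' ++ x :: l) := by simp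
      have e2 : ((a' :: A') ++ [x]) = a' :: (A' ++ [x]) := by simp
      rw [e1, e2, cost, cost]
      have := ih
      rw [e1, e2] at this
      rw [this]
      ring

lemma cost_nonneg (w : ℕ → ℕ → ℚ) (hw : ∀ a b, 0 < w a b) (l : List ℕ) : 0 ≤ cost w l := by
  rw [cost_eq_sum]
  exact Finset.sum_nonneg fun i _ => (hw _ _).le

/-! ### mod lemmas -/

lemma mod1Z_bounds {n : ℕ} (hn : 0 < n) (x : ℤ) : 1 ≤ mod1Z n x ∧ mod1Z n x ≤ n := by
  unfold mod1Z
  constructor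
  · omega
  · have h := Int.emod_lt_of_pos (x - 1) (by exact_mod_cast hn : (0:ℤ) < n)
    omega

lemma mod1Z_add_nat {n : ℕ} (hn : 0 < n) (x : ℤ) : mod1Z n (x + n) = mod1Z n x := by
  unfold mod1Z
  have : (x + n - 1) % (n:ℤ) = (x - 1) % n := by
    have : x + (n:ℤ) - 1 = (x - 1) + (n:ℤ) * 1 := by ring
    rw [this, Int.add_mul_emod_self_left]
  rw [this]

lemma mod1Z_add_mul {n : ℕ} (hn : 0 < n) (x : ℤ) (c : ℤ) : mod1Z n (x + c * n) = mod1Z n x := by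
  unfold mod1Z
  have : (x + c * n - 1) % (n:ℤ) = (x - 1) % n := by
    have : x + c * (n:ℤ) - 1 = (x - 1) + (n:ℤ) * c := by ring
    rw [this, Int.add_mul_emod_self_left]
  rw [this]

lemma mod1Z_coe {n : ℕ} (v : ℕ) (h1 : 1 ≤ v) (h2 : v ≤ n) : mod1Z n (v : ℤ) = v := by
  unfold mod1Z
  have h : ((v:ℤ) - 1) % (n:ℤ) = (v:ℤ) - 1 := Int.emod_eq_of_lt (by omega) (by omega)
  rw [h]; omega

lemma mod1_eq_self {n : ℕ} (v : ℕ) (h1 : 1 ≤ v) (h2 : v ≤ n) : mod1 n v = v := by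
  unfold mod1
  have : (v - 1) % n = v - 1 := Nat.mod_eq_of_lt (by omega)
  omega

lemma mod1_bounds {n : ℕ} (hn : 0 < n) (v : ℕ) : 1 ≤ mod1 n v ∧ mod1 n v ≤ n := by
  unfold mod1
  have := Nat.mod_lt (v - 1) hn
  omega

lemma mod1_add_n {n : ℕ} (hn : 0 < n) (v : ℕ) (h1 : 1 ≤ v) : mod1 n (v + n) = mod1 n v := by
  unfold mod1
  have : v + n - 1 = (v - 1) + n := by omega
  rw [this, Nat.add_mod_right]

lemma mod1Z_natCast {n : ℕ} (hn : 0 < n) (v : ℕ) (h1 : 1 ≤ v) : mod1Z n (v : ℤ) = mod1 n v := by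
  unfold mod1Z mod1
  have h : ((v:ℤ) - 1) % (n:ℤ) = (((v-1) % n : ℕ) : ℤ) := by
    have e1 : (v:ℤ) - 1 = ((v - 1 : ℕ) : ℤ) := by omega
    rw [e1, Int.natCast_mod]
  rw [h]
  rw [Int.toNat_natCast]

lemma mod1Z_eq_dvd {n : ℕ} (hn : 0 < n) {x : ℤ} {r : ℕ} (h : mod1Z n x = r) : (n:ℤ) ∣ x - r := by
  unfold mod1Z at h
  have h0 : 0 ≤ (x - 1) % (n:ℤ) := Int.emod_nonneg _ (by positivity)
  have h1 : ((x - 1) % (n:ℤ)) = (r:ℤ) - 1 := by omega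
  have h2 : (n:ℤ) ∣ (x - 1) - ((x-1) % n) := Int.dvd_self_sub_of_emod_eq rfl
  have : x - r = (x - 1) - ((x-1) % n) := by omega
  rw [this]; exact h2


/-! ### ell / tau spec -/





def estep (n p x : ℕ) (c : ℤ) : ℤ :=
  if p = n ∧ x = 1 then c + 1 else if p = 1 ∧ x = n then c - 1 else c

lemma ellAux_length (n : ℕ) : ∀ (xs : List ℕ) (p : ℕ) (c : ℤ),
    (ellAux n p c xs).length = xs.length := by
  intro xs
  induction xs with
  | nil => intro p c; simp [ellAux]
  | cons x xs ih => intro p c; simp [ellAux, ih]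

lemma ellAux_cons (n p : ℕ) (c : ℤ) (x : ℕ) (xs : List ℕ) :
    ellAux n p c (x :: xs) = estep n p x c :: ellAux n x (estep n p x c) xs := rfl

lemma ellAux_getD_zero (n p : ℕ) (c : ℤ) (x : ℕ) (xs : List ℕ) :
    (ellAux n p c (x :: xs)).getD 0 0 = estep n p x c := by
  rw [ellAux_cons]; rfl

lemma ellAux_getD_succ (n : ℕ) : ∀ (xs : List ℕ) (p : ℕ) (c : ℤ) (i : ℕ),
    i + 1 < xs.length →
    (ellAux n p c xs).getD (i+1) 0 =
      estep n (xs.getD i 0) (xs.getD (i+1) 0) ((ellAux n p c xs).getD i 0) := by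
  intro xs
  induction xs with
  | nil => intro p c i h; simp at h
  | cons x xs ih =>
    intro p c i h
    rw [ellAux_cons]
    cases i with
    | zero =>
      simp only [List.getD_cons_succ, List.getD_cons_zero]
      cases xs with
      | nil => simp at h
      | cons y ys => rw [ellAux_getD_zero]; rfl
    | succ j =>
      simp only [List.getD_cons_succ]
      exact ih x (estep n p x c) j (by simpa using h)

lemma ellList_length (n : ℕ) (π : List ℕ) : (ellList n π).length = π.length := by
  cases π with
  | nil => rfl
  | cons x xs => simp [ellList, ellAux_length]

lemma ellList_getD_zero (n : ℕ) (x : ℕ) (xs : List ℕ) :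
    (ellList n (x :: xs)).getD 0 0 = 0 := rfl

lemma ellList_getD_succ (n : ℕ) (π : List ℕ) (i : ℕ) (h : i + 1 < π.length) :
    (ellList n π).getD (i+1) 0 =
      estep n (π.getD i 0) (π.getD (i+1) 0) ((ellList n π).getD i 0) := by
  cases π with
  | nil => simp at h
  | cons x xs =>
    show (0 :: ellAux n x 0 xs).getD (i+1) 0 = _
    rw [List.getD_cons_succ]
    cases i with
    | zero =>
      cases xs with
      | nil => simp at h
      | cons y ys =>
        rw [ellAux_getD_zero]
        rfl
    | succ j =>
      rw [ellAux_getD_succ n xs x 0 j (by simpa using h)]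
      rfl

section TauSpec

variable {n : ℕ} (hn : 3 ≤ n) {π : List ℕ}

/-- the min used in tauList -/
noncomputable def Kmin (n : ℕ) (π : List ℕ) : ℤ := (ellList n π).foldr min 0

lemma Kmin_le (π : List ℕ) (i : ℕ) (h : i < π.length) :
    Kmin n π ≤ (ellList n π).getD i 0 := by
  have hlen : i < (ellList n π).length := by rw [ellList_length]; exact h
  rw [List.getD_eq_getElem _ _ hlen]
  exact (foldr_min_le _ _).2 _ (List.getElem_mem _)

lemma Kmin_exists (π : List ℕ) (h : π ≠ []) :
    ∃ i, i < π.length ∧ (ellList n π).getD i 0 = Kmin n π := by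
  rcases foldr_min_mem (ellList n π) 0 with h0 | hmem
  · refine ⟨0, ?_, ?_⟩
    · cases π with
      | nil => exact absurd rfl h
      | cons x xs => simp
    · cases π with
      | nil => exact absurd rfl h
      | cons x xs => rw [ellList_getD_zero]; exact h0.symm
  · rcases List.getElem_of_mem hmem with ⟨i, hi, hval⟩
    refine ⟨i, by rwa [ellList_length] at hi, ?_⟩
    rw [List.getD_eq_getElem _ _ hi, hval]; rfl

lemma tauList_length (n : ℕ) (π : List ℕ) : (tauList n π).length = π.length := by
  unfold tauList
  rw [List.length_map, List.length_zip, ellList_length, min_self]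

lemma tauList_getD (n : ℕ) (π : List ℕ) (i : ℕ) (h : i < π.length) :
    (tauList n π).getD i 0 =
      (π.getD i 0 : ℤ) + ((ellList n π).getD i 0 - Kmin n π) * n := by
  have h1 : i < (tauList n π).length := by rw [tauList_length]; exact h
  have h2 : i < (π.zip (ellList n π)).length := by
    rw [List.length_zip, ellList_length, min_self]; exact h
  have h3 : i < (ellList n π).length := by rw [ellList_length]; exact h
  rw [List.getD_eq_getElem _ _ h1]
  simp only [tauList, List.getElem_map, List.getElem_zip]
  rw [List.getD_eq_getElem _ _ h, List.getD_eq_getElem _ _ h3]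
  rfl

end TauSpec


/-! ### tau walk properties -/



section Walk

variable {n : ℕ} {π : List ℕ}

lemma tl_res (hn : 3 ≤ n) (hb : ∀ i, i < π.length → 1 ≤ π.getD i 0 ∧ π.getD i 0 ≤ n)
    (i : ℕ) (h : i < π.length) :
    mod1Z n ((tauList n π).getD i 0) = π.getD i 0 := by
  rw [tauList_getD n π i h]
  have hb' := hb i h
  have hpos : 0 < n := by omega
  rw [mod1Z_add_mul hpos]
  exact mod1Z_coe _ hb'.1 hb'.2

lemma tl_ge_one (hn : 3 ≤ n) (hb : ∀ i, i < π.length → 1 ≤ π.getD i 0 ∧ π.getD i 0 ≤ n)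
    (i : ℕ) (h : i < π.length) : 1 ≤ (tauList n π).getD i 0 := by
  rw [tauList_getD n π i h]
  have hb' := hb i h
  have h1 : Kmin n π ≤ (ellList n π).getD i 0 := Kmin_le π i h
  have : (1 : ℤ) ≤ (π.getD i 0 : ℤ) := by exact_mod_cast hb'.1
  nlinarith [(by omega : (0:ℤ) ≤ (n:ℤ))]

lemma tl_exists_le_n (hn : 3 ≤ n) (hb : ∀ i, i < π.length → 1 ≤ π.getD i 0 ∧ π.getD i 0 ≤ n)
    (hne : π ≠ []) : ∃ i, i < π.length ∧ (tauList n π).getD i 0 ≤ n := by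
  rcases Kmin_exists π hne with ⟨i, hi, hK⟩
  refine ⟨i, hi, ?_⟩
  rw [tauList_getD n π i hi, hK]
  simp only [sub_self, zero_mul, add_zero]
  exact_mod_cast (hb i hi).2

lemma tl_step (hn : 3 ≤ n) (hb : ∀ i, i < π.length → 1 ≤ π.getD i 0 ∧ π.getD i 0 ≤ n)
    (hc : ∀ i, i + 1 < π.length → cycAdj n (π.getD i 0) (π.getD (i+1) 0))
    (i : ℕ) (h : i + 1 < π.length) :
    (tauList n π).getD (i+1) 0 = (tauList n π).getD i 0 + 1 ∨
      (tauList n π).getD (i+1) 0 = (tauList n π).getD i 0 - 1 := by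
  have hi : i < π.length := by omega
  rw [tauList_getD n π i hi, tauList_getD n π (i+1) h, ellList_getD_succ n π i h]
  set p := π.getD i 0 with hp
  set x := π.getD (i+1) 0 with hx
  set e := (ellList n π).getD i 0 with he
  have hadj := hc i h
  obtain ⟨hor, hp1, hpn, hx1, hxn⟩ := hadj
  unfold estep
  rcases hor with h1 | h1 | h1 | h1
  · -- x = p + 1
    rw [if_neg (by omega), if_neg (by omega)]
    left
    have : (x : ℤ) = (p : ℤ) + 1 := by exact_mod_cast h1
    linarith
  · -- p = x + 1
    rw [if_neg (by omega), if_neg (by omega)]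
    right
    have : (p : ℤ) = (x : ℤ) + 1 := by exact_mod_cast h1
    linarith
  · -- p = n, x = 1
    rw [if_pos h1]
    left
    have hpn' : (p : ℤ) = (n : ℤ) := by exact_mod_cast h1.1
    have hx1' : (x : ℤ) = 1 := by exact_mod_cast h1.2
    rw [hpn', hx1']; ring
  · -- p = 1, x = n
    rw [if_neg (by omega), if_pos h1]
    right
    have hp1' : (p : ℤ) = 1 := by exact_mod_cast h1.1
    have hxn' : (x : ℤ) = (n : ℤ) := by exact_mod_cast h1.2
    rw [hp1', hxn']; ring

lemma tl_headD (hne : π ≠ []) :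
    (tauList n π).headD 0 = (tauList n π).getD 0 0 := by
  have : tauList n π ≠ [] := by
    intro hcon
    have := tauList_length n π
    rw [hcon] at this
    cases π with
    | nil => exact hne rfl
    | cons a l => simp at this
  cases h : tauList n π with
  | nil => exact absurd h this
  | cons a l => rfl

lemma le_cw (hne : π ≠ []) (i : ℕ) (h : i < π.length) :
    (tauList n π).getD i 0 ≤ cw n π := by
  have h1 : i < (tauList n π).length := by rw [tauList_length]; exact h
  rw [List.getD_eq_getElem _ _ h1]
  exact (le_foldr_max _ _).2 _ (List.getElem_mem _)

lemma acw_le (hne : π ≠ []) (i : ℕ) (h : i < π.length) :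
    acw n π ≤ (tauList n π).getD i 0 := by
  have h1 : i < (tauList n π).length := by rw [tauList_length]; exact h
  rw [List.getD_eq_getElem _ _ h1]
  exact (foldr_min_le _ _).2 _ (List.getElem_mem _)

lemma cw_mem (hne : π ≠ []) : ∃ i, i < π.length ∧ (tauList n π).getD i 0 = cw n π := by
  have hlen : 0 < π.length := List.length_pos_iff.2 hne
  rcases foldr_max_mem (tauList n π) ((tauList n π).headD 0) with h0 | hmem
  · exact ⟨0, hlen, by rw [← tl_headD hne]; exact h0.symm⟩
  · rcases List.getElem_of_mem hmem with ⟨i, hi, hval⟩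
    refine ⟨i, by rwa [tauList_length] at hi, ?_⟩
    rw [List.getD_eq_getElem _ _ hi, hval]; rfl

lemma acw_mem (hne : π ≠ []) : ∃ i, i < π.length ∧ (tauList n π).getD i 0 = acw n π := by
  have hlen : 0 < π.length := List.length_pos_iff.2 hne
  rcases foldr_min_mem (tauList n π) ((tauList n π).headD 0) with h0 | hmem
  · exact ⟨0, hlen, by rw [← tl_headD hne]; exact h0.symm⟩
  · rcases List.getElem_of_mem hmem with ⟨i, hi, hval⟩
    refine ⟨i, by rwa [tauList_length] at hi, ?_⟩
    rw [List.getD_eq_getElem _ _ hi, hval]; rfl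

lemma acw_ge_one (hn : 3 ≤ n) (hb : ∀ i, i < π.length → 1 ≤ π.getD i 0 ∧ π.getD i 0 ≤ n)
    (hne : π ≠ []) : 1 ≤ acw n π := by
  rcases acw_mem (n := n) hne with ⟨i, hi, hv⟩
  rw [← hv]; exact tl_ge_one hn hb i hi

lemma acw_le_n (hn : 3 ≤ n) (hb : ∀ i, i < π.length → 1 ≤ π.getD i 0 ∧ π.getD i 0 ≤ n)
    (hne : π ≠ []) : acw n π ≤ n := by
  rcases tl_exists_le_n hn hb hne with ⟨i, hi, hv⟩
  exact le_trans (acw_le hne i hi) hv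

end Walk


/-! ### straddle and uniqueness -/

section Straddle

variable {n : ℕ} {π : List ℕ}

lemma exists_up (hstep : ∀ i, i + 1 < π.length →
      (tauList n π).getD (i+1) 0 = (tauList n π).getD i 0 + 1 ∨
      (tauList n π).getD (i+1) 0 = (tauList n π).getD i 0 - 1)
    (k : ℤ) :
    ∀ (d p q : ℕ), q - p = d → p ≤ q → q < π.length →
    (tauList n π).getD p 0 ≤ k → k < (tauList n π).getD q 0 →
    ∃ i, p ≤ i ∧ i + 1 ≤ q ∧ (tauList n π).getD i 0 = k ∧ (tauList n π).getD (i+1) 0 = k + 1 := by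
  intro d
  induction d with
  | zero =>
    intro p q hd hpq hq h1 h2
    have : p = q := by omega
    subst this; omega
  | succ d ih =>
    intro p q hd hpq hq h1 h2
    have hpq' : p < q := by omega
    by_cases hc : (tauList n π).getD (q-1) 0 ≤ k
    · have hq1 : q - 1 + 1 = q := by omega
      have hs := hstep (q-1) (by omega)
      rw [hq1] at hs
      refine ⟨q - 1, by omega, by omega, ?_, ?_⟩
      · rcases hs with hs | hs <;> omega
      · rw [hq1]; rcases hs with hs | hs <;> omega
    · obtain ⟨i, hi1, hi2, hi3, hi4⟩ := ih p (q-1) (by omega) (by omega) (by omega) h1 (by omega)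
      exact ⟨i, hi1, by omega, hi3, hi4⟩

lemma exists_down (hstep : ∀ i, i + 1 < π.length →
      (tauList n π).getD (i+1) 0 = (tauList n π).getD i 0 + 1 ∨
      (tauList n π).getD (i+1) 0 = (tauList n π).getD i 0 - 1)
    (k : ℤ) :
    ∀ (d p q : ℕ), q - p = d → p ≤ q → q < π.length →
    k < (tauList n π).getD p 0 → (tauList n π).getD q 0 ≤ k →
    ∃ i, p ≤ i ∧ i + 1 ≤ q ∧ (tauList n π).getD i 0 = k + 1 ∧ (tauList n π).getD (i+1) 0 = k := by
  intro d
  induction d with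
  | zero =>
    intro p q hd hpq hq h1 h2
    have : p = q := by omega
    subst this; omega
  | succ d ih =>
    intro p q hd hpq hq h1 h2
    have hpq' : p < q := by omega
    by_cases hc : k < (tauList n π).getD (q-1) 0
    · have hq1 : q - 1 + 1 = q := by omega
      have hs := hstep (q-1) (by omega)
      rw [hq1] at hs
      refine ⟨q - 1, by omega, by omega, ?_, ?_⟩
      · rcases hs with hs | hs <;> omega
      · rw [hq1]; rcases hs with hs | hs <;> omega
    · obtain ⟨i, hi1, hi2, hi3, hi4⟩ := ih p (q-1) (by omega) (by omega) (by omega) h1 (by omega)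
      exact ⟨i, hi1, by omega, hi3, hi4⟩

lemma tau_eq_of_spec (hn : 3 ≤ n)
    (hb : ∀ i, i < π.length → 1 ≤ π.getD i 0 ∧ π.getD i 0 ≤ n)
    (hc : ∀ i, i + 1 < π.length → cycAdj n (π.getD i 0) (π.getD (i+1) 0))
    (hne : π ≠ []) (σ : List ℤ)
    (hlen : σ.length = π.length)
    (hres : ∀ i, i < π.length → mod1Z n (σ.getD i 0) = π.getD i 0)
    (hstep : ∀ i, i + 1 < π.length →
      σ.getD (i+1) 0 = σ.getD i 0 + 1 ∨ σ.getD (i+1) 0 = σ.getD i 0 - 1)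
    (hge : ∀ i, i < π.length → 1 ≤ σ.getD i 0)
    (hle : ∃ i, i < π.length ∧ σ.getD i 0 ≤ n) :
    tauList n π = σ := by
  have hpos : 0 < n := by omega
  have hdvd : ∀ i, i < π.length → (n:ℤ) ∣ σ.getD i 0 - (tauList n π).getD i 0 := by
    intro i hi
    have h1 : (n:ℤ) ∣ σ.getD i 0 - (π.getD i 0 : ℤ) := mod1Z_eq_dvd hpos (hres i hi)
    have h2 : (n:ℤ) ∣ (tauList n π).getD i 0 - (π.getD i 0 : ℤ) := mod1Z_eq_dvd hpos (tl_res hn hb i hi)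
    have : σ.getD i 0 - (tauList n π).getD i 0 = (σ.getD i 0 - (π.getD i 0:ℤ)) - ((tauList n π).getD i 0 - (π.getD i 0:ℤ)) := by ring
    rw [this]; exact dvd_sub h1 h2
  have hconst : ∀ i, i < π.length → σ.getD i 0 - (tauList n π).getD i 0 = σ.getD 0 0 - (tauList n π).getD 0 0 := by
    intro i
    induction i with
    | zero => intro _; rfl
    | succ j ihj =>
      intro hj
      have hj' : j < π.length := by omega
      have e1 := ihj hj'
      have s1 := hstep j hj
      have s2 := tl_step hn hb hc j hj
      rcases s1 with s1 | s1 <;> rcases s2 with s2 | s2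
      · rw [s1, s2]; omega
      · exfalso
        have d1 := hdvd j hj'
        have d2 := hdvd (j+1) hj
        rw [s1, s2] at d2
        have : (n:ℤ) ∣ 2 := by
          have : ((σ.getD j 0 + 1) - ((tauList n π).getD j 0 - 1)) - (σ.getD j 0 - (tauList n π).getD j 0) = 2 := by ring
          rw [← this]; exact dvd_sub d2 d1
        have : (n:ℤ) ≤ 2 := Int.le_of_dvd (by norm_num) this
        omega
      · exfalso
        have d1 := hdvd j hj'
        have d2 := hdvd (j+1) hj
        rw [s1, s2] at d2
        have : (n:ℤ) ∣ 2 := by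
          have h2 : ((σ.getD j 0 - (tauList n π).getD j 0)) - ((σ.getD j 0 - 1) - ((tauList n π).getD j 0 + 1)) = 2 := by ring
          rw [← h2]; exact dvd_sub d1 d2
        have : (n:ℤ) ≤ 2 := Int.le_of_dvd (by norm_num) this
        omega
      · rw [s1, s2]; omega
  have hcdef : True := trivial
  set c := σ.getD 0 0 - (tauList n π).getD 0 0 with hcdef2
  have hc0 : c = 0 := by
    have hdvdc : (n:ℤ) ∣ c := hdvd 0 (List.length_pos_iff.2 hne)
    rcases tl_exists_le_n hn hb hne with ⟨i0, hi0, hv0⟩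
    rcases hle with ⟨i1, hi1, hv1⟩
    have hge0 := hge i0 hi0
    have hge1 := tl_ge_one hn hb i1 hi1
    have e0 := hconst i0 hi0
    have e1 := hconst i1 hi1
    have habs : |c| < n := by
      rw [abs_lt]; constructor <;> omega
    exact Int.eq_zero_of_abs_lt_dvd hdvdc habs
  apply List.ext_getElem
  · rw [tauList_length, hlen]
  · intro i h1 h2
    have hi : i < π.length := by rwa [tauList_length] at h1
    have := hconst i hi
    rw [hc0] at this
    have e : (tauList n π).getD i 0 = σ.getD i 0 := by omega
    rw [List.getD_eq_getElem _ _ h1, List.getD_eq_getElem _ _ h2] at e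
    exact e

end Straddle


/-! ### interval sums on the unrolled cycle -/

def wk (n : ℕ) (w : ℕ → ℕ → ℚ) (k : ℤ) : ℚ := w (mod1Z n k) (mod1Z n (k+1))

noncomputable def SI (n : ℕ) (w : ℕ → ℕ → ℚ) (x y : ℤ) : ℚ := ∑ k ∈ Finset.Ico x y, wk n w k

noncomputable def Wcyc (n : ℕ) (w : ℕ → ℕ → ℚ) : ℚ := SI n w 1 (1 + n)

section Sums

variable {n : ℕ} {w : ℕ → ℕ → ℚ}

lemma wk_nonneg (hw : ∀ a b, 0 < w a b) (k : ℤ) : 0 ≤ wk n w k := (hw _ _).le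

lemma wk_period (hn : 0 < n) (k : ℤ) : wk n w (k + n) = wk n w k := by
  unfold wk
  rw [mod1Z_add_nat hn]
  have : k + (n:ℤ) + 1 = (k + 1) + n := by ring
  rw [this, mod1Z_add_nat hn]

lemma SI_nonneg (hw : ∀ a b, 0 < w a b) (x y : ℤ) : 0 ≤ SI n w x y :=
  Finset.sum_nonneg fun k _ => wk_nonneg hw k

lemma SI_split {x y z : ℤ} (hxy : x ≤ y) (hyz : y ≤ z) :
    SI n w x y + SI n w y z = SI n w x z := by
  unfold SI
  rw [← Finset.sum_union (Finset.Ico_disjoint_Ico_consecutive x y z),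
    Finset.Ico_union_Ico_eq_Ico hxy hyz]

lemma SI_mono (hw : ∀ a b, 0 < w a b) {x x' y y' : ℤ} (hx : x' ≤ x) (hy : y ≤ y') :
    SI n w x y ≤ SI n w x' y' := by
  by_cases hxy : x ≤ y
  · apply Finset.sum_le_sum_of_subset_of_nonneg
    · apply Finset.Ico_subset_Ico hx hy
    · intro k _ _; exact wk_nonneg hw k
  · have : SI n w x y = 0 := by
      unfold SI
      rw [Finset.Ico_eq_empty (by omega), Finset.sum_empty]
    rw [this]; exact SI_nonneg hw _ _

lemma SI_shift (hn : 0 < n) (x y : ℤ) : SI n w (x + n) (y + n) = SI n w x y := by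
  unfold SI
  have : Finset.Ico (x + (n:ℤ)) (y + n) = (Finset.Ico x y).map (addRightEmbedding (n:ℤ)) := by
    rw [Finset.map_add_right_Ico]
  rw [this, Finset.sum_map]
  apply Finset.sum_congr rfl
  intro k _
  exact wk_period hn k

lemma SI_shift' (hn : 0 < n) {x y x' y' : ℤ} (hx : x' = x + n) (hy : y' = y + n) :
    SI n w x' y' = SI n w x y := by
  rw [hx, hy]; exact SI_shift hn x y

lemma SI_single (x : ℤ) : SI n w x (x + 1) = wk n w x := by
  unfold SI
  have : Finset.Ico x (x + 1) = {x} := by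
    ext k; simp only [Finset.mem_Ico, Finset.mem_singleton]; omega
  rw [this, Finset.sum_singleton]

lemma SI_period_step (hn : 0 < n) (x : ℤ) : SI n w x (x + n) = SI n w (x+1) (x+1+n) := by
  have h1 : SI n w x (x + 1) + SI n w (x+1) (x+1+n) = SI n w x (x+1+n) :=
    SI_split (by omega) (by omega)
  have h2 : SI n w x (x + n) + SI n w (x+n) (x+n+1) = SI n w x (x+n+1) :=
    SI_split (by omega) (by omega)
  have h3 : SI n w (x+n) (x+n+1) = wk n w (x+n) := SI_single _
  have h4 : SI n w x (x+1) = wk n w x := SI_single _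
  have h5 : wk n w (x + n) = wk n w x := wk_period hn x
  have h6 : x + 1 + (n:ℤ) = x + n + 1 := by ring
  rw [h6] at h1 ⊢
  linarith

lemma SI_period (hn : 0 < n) (x : ℤ) : SI n w x (x + n) = Wcyc n w := by
  unfold Wcyc
  have key : ∀ z : ℤ, SI n w z (z + n) = SI n w 0 (0 + n) := by
    intro z
    induction z using Int.induction_on with
    | zero => rfl
    | succ i ih => rw [← SI_period_step hn i] at *; exact ih
    | pred i ih => rw [SI_period_step hn (-(i:ℤ) - 1)]; simpa using ih
  rw [key x, key 1]

lemma SI_nmul (hn : 0 < n) (q : ℕ) (y : ℤ) :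
    SI n w y (y + n * q) = q * Wcyc n w := by
  induction q with
  | zero => simp [SI, Finset.Ico_eq_empty_iff]
  | succ k ih =>
    have e : ((k+1 : ℕ) : ℤ) = (k : ℤ) + 1 := by push_cast; ring
    rw [e]
    have e2 : y + (n:ℤ) * ((k:ℤ) + 1) = y + (n:ℤ)*(k:ℤ) + n := by ring
    rw [e2]
    have hsplit : SI n w y (y + (n:ℤ)*(k:ℤ)) + SI n w (y + (n:ℤ)*(k:ℤ)) (y + (n:ℤ)*(k:ℤ) + n) =
        SI n w y (y + (n:ℤ)*(k:ℤ) + n) := SI_split (le_add_of_nonneg_right (by positivity)) (by omega)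
    rw [← hsplit, ih, SI_period hn]
    push_cast; ring

lemma SI_imul (hn : 0 < n) {lam : ℤ} (hlam : 0 ≤ lam) (y : ℤ) :
    SI n w y (y + lam * n) = lam * Wcyc n w := by
  have h : lam = (lam.toNat : ℤ) := (Int.toNat_of_nonneg hlam).symm
  rw [h]
  have e : y + ((lam.toNat : ℤ)) * n = y + (n:ℤ) * (lam.toNat : ℤ) := by ring
  rw [e, SI_nmul hn lam.toNat y]
  push_cast; ring

lemma Wcyc_nonneg (hw : ∀ a b, 0 < w a b) : 0 ≤ Wcyc n w := SI_nonneg hw _ _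

end Sums

/-! ### the key inequality -/

lemma keyIneq (n : ℕ) (hn : 3 ≤ n) (w : ℕ → ℕ → ℚ) (hw : ∀ a b, 0 < w a b)
    (u l1 l2 μ lam : ℤ) (h1 : 0 ≤ l1) (h2 : 0 ≤ l2) (hm0 : 0 ≤ μ) (hmn : μ ≤ n)
    (hlam : 0 ≤ lam) (htot : 2*(n:ℤ) + 1 ≤ l1 + l2 + μ + lam * n) :
    2 * Wcyc n w + min (SI n w u (u + μ)) (Wcyc n w - SI n w u (u + μ)) ≤
      2 * SI n w (u - l1) u + SI n w u (u + μ + lam * n) +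
        2 * SI n w (u + μ + lam * n) (u + μ + lam * n + l2) := by
  have hnp : 0 < n := by omega
  have hW : 0 ≤ Wcyc n w := Wcyc_nonneg hw
  have hD0 : 0 ≤ SI n w u (u + μ) := SI_nonneg hw _ _
  have hDW : SI n w u (u + μ) ≤ Wcyc n w := by
    have := SI_mono (n := n) (w := w) hw (le_refl u) (by omega : u + μ ≤ u + n)
    rw [SI_period hnp] at this
    exact this
  have hF1 : 0 ≤ SI n w (u - l1) u := SI_nonneg hw _ _
  have hF2 : 0 ≤ SI n w (u + μ + lam * n) (u + μ + lam * n + l2) := SI_nonneg hw _ _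
  have hMid : SI n w u (u + μ + lam * n) = SI n w u (u + μ) + lam * Wcyc n w := by
    rw [← SI_split (by omega : u ≤ u + μ) (by nlinarith : u + μ ≤ u + μ + lam * n)]
    rw [SI_imul hnp hlam]
  have hmin1 : min (SI n w u (u + μ)) (Wcyc n w - SI n w u (u + μ)) ≤ SI n w u (u + μ) :=
    min_le_left _ _
  have hmin2 : min (SI n w u (u + μ)) (Wcyc n w - SI n w u (u + μ)) ≤
      Wcyc n w - SI n w u (u + μ) := min_le_right _ _
  by_cases hcase : 2 ≤ lam
  · have hl : (2 : ℚ) ≤ (lam : ℚ) := by exact_mod_cast hcase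
    have : (2:ℚ) * Wcyc n w ≤ (lam:ℚ) * Wcyc n w := mul_le_mul_of_nonneg_right hl hW
    linarith
  by_cases hcase1 : lam = 1
  · subst hcase1
    norm_num at hMid htot ⊢
    have hWD : Wcyc n w - SI n w u (u + μ) = SI n w (u + μ) (u + n) := by
      have := SI_split (n := n) (w := w) (by omega : u ≤ u + μ) (by omega : u + μ ≤ u + n)
      rw [SI_period hnp] at this
      linarith
    have hshift : SI n w (u + μ + n) (u + 2 * n) = SI n w (u + μ) (u + n) :=
      SI_shift' hnp (by ring) (by ring)
    have key : Wcyc n w - SI n w u (u + μ) ≤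
        SI n w (u - l1) u + SI n w (u + μ + n) (u + μ + n + l2) := by
      by_cases hc2 : (n:ℤ) - μ ≤ l2
      · have hm : SI n w (u + μ + n) (u + 2 * n) ≤
            SI n w (u + μ + n) (u + μ + n + l2) :=
          SI_mono hw (le_refl _) (by omega)
        rw [hWD, ← hshift]
        linarith
      · have hsplit : SI n w (u + μ + n) (u + μ + n + l2) +
            SI n w (u + μ + n + l2) (u + 2*n) = SI n w (u + μ + n) (u + 2*n) :=
          SI_split (by omega) (by omega)
        have hrest : SI n w (u + μ + n + l2) (u + 2*n) ≤ SI n w (u - l1) u := by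
          have e1 : SI n w (u - l1 + n + n) (u + n + n) = SI n w (u - l1) u := by
            rw [SI_shift' hnp (x := u - l1 + n) (y := u + n) rfl rfl,
              SI_shift' hnp (x := u - l1) (y := u) rfl rfl]
          rw [← e1]
          exact SI_mono hw (by omega) (by omega)
        rw [hWD, ← hshift]
        linarith
    -- conclude
    have hMid' : SI n w u (u + μ + n) = SI n w u (u + μ) + Wcyc n w := by
      rw [← SI_split (by omega : u ≤ u + μ) (by omega : u + μ ≤ u + μ + n), SI_period hnp]
    linarith
  · have hlam0 : lam = 0 := by omega
    subst hlam0
    norm_num at hMid htot ⊢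
    have key : Wcyc n w ≤ SI n w (u - l1) u + SI n w (u + μ) (u + μ + l2) := by
      by_cases c1 : (n:ℤ) ≤ l1
      · have e1 : SI n w (u - l1) (u - l1 + n) = Wcyc n w := SI_period hnp _
        have hm := SI_mono (n := n) (w := w) hw (le_refl (u - l1)) (by omega : u - l1 + n ≤ u)
        rw [e1] at hm
        have := SI_nonneg (n := n) (w := w) hw (u + μ) (u + μ + l2)
        linarith
      by_cases c2 : (n:ℤ) - μ + 1 ≤ l1
      · have e1 : SI n w (u - l1) (u - l1 + n) = Wcyc n w := SI_period hnp _
        have hsplit : SI n w (u - l1) u + SI n w u (u - l1 + n) = SI n w (u - l1) (u - l1 + n) :=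
          SI_split (by omega) (by omega)
        have e2 : SI n w (u + μ) (u + μ + l2) = SI n w (u + μ - n) (u + μ - n + l2) :=
          SI_shift' hnp (by ring) (by ring)
        have hmono : SI n w u (u - l1 + n) ≤ SI n w (u + μ - n) (u + μ - n + l2) :=
          SI_mono hw (by omega) (by omega)
        rw [← e2] at hmono
        linarith
      · have hl2 : (n:ℤ) ≤ l2 := by omega
        have e1 : SI n w (u + μ) (u + μ + n) = Wcyc n w := SI_period hnp _
        have hm := SI_mono (n := n) (w := w) hw (le_refl (u + μ))
          (by omega : u + μ + n ≤ u + μ + l2)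
        rw [e1] at hm
        have := SI_nonneg (n := n) (w := w) hw (u - l1) u
        linarith
    linarith


/-! ### cost lower bound via crossing counts -/

lemma cost_lower {n : ℕ} {w : ℕ → ℕ → ℚ} {π : List ℕ} (hn : 3 ≤ n)
    (hw : ∀ a b, 0 < w a b) (hwsym : ∀ a b, w a b = w b a)
    (hb : ∀ i, i < π.length → 1 ≤ π.getD i 0 ∧ π.getD i 0 ≤ n)
    (hc : ∀ i, i + 1 < π.length → cycAdj n (π.getD i 0) (π.getD (i+1) 0))
    (hlen : 2 ≤ π.length) :
    2 * SI n w (acw n π)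
        (min ((tauList n π).getD 0 0) ((tauList n π).getD (π.length - 1) 0)) +
      SI n w (min ((tauList n π).getD 0 0) ((tauList n π).getD (π.length - 1) 0))
        (max ((tauList n π).getD 0 0) ((tauList n π).getD (π.length - 1) 0)) +
      2 * SI n w (max ((tauList n π).getD 0 0) ((tauList n π).getD (π.length - 1) 0))
        (cw n π) ≤ cost w π := by
  have hne : π ≠ [] := by intro hcon; rw [hcon] at hlen; simp at hlen
  set m := acw n π with hm
  set M := cw n π with hM
  set a := (tauList n π).getD 0 0 with ha
  set b := (tauList n π).getD (π.length - 1) 0 with hbdef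
  set u := min a b with hu
  set v := max a b with hv
  have hstep := fun i hi => tl_step (n := n) (π := π) hn hb hc i hi
  -- index of min and max
  obtain ⟨im, him, hvim⟩ := acw_mem (n := n) hne
  obtain ⟨iM, hiM, hviM⟩ := cw_mem (n := n) hne
  have hma : m ≤ a := acw_le hne 0 (by omega)
  have hmb : m ≤ b := acw_le hne (π.length - 1) (by omega)
  have haM : a ≤ M := le_cw hne 0 (by omega)
  have hbM : b ≤ M := le_cw hne (π.length - 1) (by omega)
  have hmu : m ≤ u := le_min hma hmb
  have hvM : v ≤ M := max_le haM hbM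
  have huv : u ≤ v := min_le_max
  -- the level of each step
  set e : ℕ → ℤ := fun i => min ((tauList n π).getD i 0) ((tauList n π).getD (i+1) 0) with he
  have hterm : ∀ i, i + 1 < π.length → w (π.getD i 0) (π.getD (i+1) 0) = wk n w (e i) := by
    intro i hi
    have hi' : i < π.length := by omega
    rcases hstep i hi with hs | hs
    · have he1 : e i = (tauList n π).getD i 0 := by
        simp only [he]; rw [hs]; exact min_eq_left (by omega)
      rw [he1]
      unfold wk
      rw [tl_res hn hb i hi', ← hs, tl_res hn hb (i+1) hi]
    · have he1 : e i = (tauList n π).getD (i+1) 0 := by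
        simp only [he]; rw [hs]; exact min_eq_right (by omega)
      rw [he1]
      unfold wk
      rw [tl_res hn hb (i+1) hi]
      have : (tauList n π).getD (i+1) 0 + 1 = (tauList n π).getD i 0 := by omega
      rw [this, tl_res hn hb i hi', hwsym]
  have hmapsto : ∀ i ∈ Finset.range (π.length - 1), e i ∈ Finset.Ico m M := by
    intro i hi
    rw [Finset.mem_range] at hi
    have hi1 : i + 1 < π.length := by omega
    have hi' : i < π.length := by omega
    rw [Finset.mem_Ico]
    constructor
    · exact le_min (acw_le hne i hi') (acw_le hne (i+1) hi1)
    · rcases hstep i hi1 with hs | hs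
      · have hle := le_cw (n := n) hne (i+1) hi1
        simp only [he]
        rw [hs]
        rw [min_eq_left (by omega)]
        rw [hs] at hle
        omega
      · have hle := le_cw (n := n) hne i hi'
        simp only [he]
        rw [hs]
        rw [min_eq_right (by omega)]
        omega
  -- cost as a sum over levels
  have hcost : cost w π = ∑ k ∈ Finset.Ico m M,
      ∑ i ∈ (Finset.range (π.length - 1)).filter (fun i => e i = k), wk n w (e i) := by
    rw [Finset.sum_fiberwise_of_maps_to hmapsto]
    rw [cost_eq_sum]
    apply Finset.sum_congr rfl
    intro i hi
    rw [Finset.mem_range] at hi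
    exact hterm i (by omega)
  -- each fiber sum is card * wk k
  have hfiber : ∀ k ∈ Finset.Ico m M,
      ∑ i ∈ (Finset.range (π.length - 1)).filter (fun i => e i = k), wk n w (e i) =
        ((Finset.range (π.length - 1)).filter (fun i => e i = k)).card * wk n w k := by
    intro k _
    have h1 : ∑ i ∈ (Finset.range (π.length - 1)).filter (fun i => e i = k), wk n w (e i) =
        ∑ _i ∈ (Finset.range (π.length - 1)).filter (fun i => e i = k), wk n w k :=
      Finset.sum_congr rfl (fun i hi => by rw [(Finset.mem_filter.1 hi).2])
    rw [h1, Finset.sum_const, nsmul_eq_mul]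
  -- crossing count bounds
  have hcount : ∀ k ∈ Finset.Ico m M,
      (if k < u ∨ v ≤ k then 2 else 1) ≤
        ((Finset.range (π.length - 1)).filter (fun i => e i = k)).card := by
    intro k hk
    rw [Finset.mem_Ico] at hk
    by_cases hflank : k < u ∨ v ≤ k
    · rw [if_pos hflank]
      rcases hflank with hfl | hfl
      · -- low flank: a > k, b > k, m <= k
        obtain ⟨i1, hi11, hi12, hi13, hi14⟩ := exists_down (n := n) (π := π) hstep k
          im 0 im rfl (by omega) him (by omega) (by omega)
        obtain ⟨i2, hi21, hi22, hi23, hi24⟩ := exists_up (n := n) (π := π) hstep k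
          (π.length - 1 - im) im (π.length - 1) rfl (by omega) (by omega) (by omega) (by omega)
        have hlt : 1 < ((Finset.range (π.length - 1)).filter (fun i => e i = k)).card := by
          rw [Finset.one_lt_card]
          refine ⟨i1, ?_, i2, ?_, ?_⟩
          · rw [Finset.mem_filter, Finset.mem_range]
            refine ⟨by omega, ?_⟩
            simp only [he]
            rw [hi13, hi14]
            exact min_eq_right (by omega)
          · rw [Finset.mem_filter, Finset.mem_range]
            refine ⟨by omega, ?_⟩
            simp only [he]
            rw [hi23, hi24]
            exact min_eq_left (by omega)
          · intro hcon
            rw [hcon] at hi13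
            omega
        omega
      · -- high flank: a ≤ k, b ≤ k, k < M
        obtain ⟨i1, hi11, hi12, hi13, hi14⟩ := exists_up (n := n) (π := π) hstep k
          iM 0 iM rfl (by omega) hiM (by omega) (by omega)
        obtain ⟨i2, hi21, hi22, hi23, hi24⟩ := exists_down (n := n) (π := π) hstep k
          (π.length - 1 - iM) iM (π.length - 1) rfl (by omega) (by omega) (by omega) (by omega)
        have hlt : 1 < ((Finset.range (π.length - 1)).filter (fun i => e i = k)).card := by
          rw [Finset.one_lt_card]
          refine ⟨i1, ?_, i2, ?_, ?_⟩
          · rw [Finset.mem_filter, Finset.mem_range]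
            refine ⟨by omega, ?_⟩
            simp only [he]
            rw [hi13, hi14]
            exact min_eq_left (by omega)
          · rw [Finset.mem_filter, Finset.mem_range]
            refine ⟨by omega, ?_⟩
            simp only [he]
            rw [hi23, hi24]
            exact min_eq_right (by omega)
          · intro hcon
            rw [hcon] at hi13
            omega
        omega
    · rw [if_neg hflank]
      rw [Nat.succ_le_iff, Finset.card_pos]
      by_cases hord : im ≤ iM
      · obtain ⟨i, hi1, hi2, hi3, hi4⟩ := exists_up (n := n) (π := π) hstep k
          (iM - im) im iM rfl hord hiM (by omega) (by omega)
        refine ⟨i, ?_⟩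
        rw [Finset.mem_filter, Finset.mem_range]
        refine ⟨by omega, ?_⟩
        simp only [he]
        rw [hi3, hi4]
        exact min_eq_left (by omega)
      · obtain ⟨i, hi1, hi2, hi3, hi4⟩ := exists_down (n := n) (π := π) hstep k
          (im - iM) iM im rfl (by omega) him (by omega) (by omega)
        refine ⟨i, ?_⟩
        rw [Finset.mem_filter, Finset.mem_range]
        refine ⟨by omega, ?_⟩
        simp only [he]
        rw [hi3, hi4]
        exact min_eq_right (by omega)
  -- lower bound the fiberwise sum
  have hlow : ∑ k ∈ Finset.Ico m M, (((if k < u ∨ v ≤ k then 2 else 1) : ℕ) : ℚ) * wk n w k ≤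
      cost w π := by
    rw [hcost]
    apply Finset.sum_le_sum
    intro k hk
    rw [hfiber k hk]
    apply mul_le_mul_of_nonneg_right _ (wk_nonneg hw k)
    exact_mod_cast hcount k hk
  -- compute the weighted sum
  have hsplit1 : ∑ k ∈ Finset.Ico m M, (((if k < u ∨ v ≤ k then 2 else 1) : ℕ) : ℚ) * wk n w k =
      (∑ k ∈ Finset.Ico m u, (((if k < u ∨ v ≤ k then 2 else 1) : ℕ) : ℚ) * wk n w k) +
      (∑ k ∈ Finset.Ico u v, (((if k < u ∨ v ≤ k then 2 else 1) : ℕ) : ℚ) * wk n w k) +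
      (∑ k ∈ Finset.Ico v M, (((if k < u ∨ v ≤ k then 2 else 1) : ℕ) : ℚ) * wk n w k) := by
    rw [← Finset.sum_union (Finset.Ico_disjoint_Ico_consecutive m u v),
      Finset.Ico_union_Ico_eq_Ico hmu huv]
    rw [← Finset.sum_union (Finset.Ico_disjoint_Ico_consecutive m v M),
      Finset.Ico_union_Ico_eq_Ico (le_trans hmu huv) hvM]
  have hc1 : ∑ k ∈ Finset.Ico m u, (((if k < u ∨ v ≤ k then 2 else 1) : ℕ) : ℚ) * wk n w k =
      2 * SI n w m u := by
    unfold SI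
    rw [Finset.mul_sum]
    apply Finset.sum_congr rfl
    intro k hk
    rw [Finset.mem_Ico] at hk
    rw [if_pos (Or.inl hk.2)]
    norm_num
  have hc2 : ∑ k ∈ Finset.Ico u v, (((if k < u ∨ v ≤ k then 2 else 1) : ℕ) : ℚ) * wk n w k =
      SI n w u v := by
    unfold SI
    apply Finset.sum_congr rfl
    intro k hk
    rw [Finset.mem_Ico] at hk
    rw [if_neg (by push_neg; omega)]
    norm_num
  have hc3 : ∑ k ∈ Finset.Ico v M, (((if k < u ∨ v ≤ k then 2 else 1) : ℕ) : ℚ) * wk n w k =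
      2 * SI n w v M := by
    unfold SI
    rw [Finset.mul_sum]
    apply Finset.sum_congr rfl
    intro k hk
    rw [Finset.mem_Ico] at hk
    rw [if_pos (Or.inr hk.1)]
    norm_num
  rw [hsplit1, hc1, hc2, hc3] at hlow
  exact hlow


/-! ### scenario definitions (copies) -/







/-! ### extracting hypotheses from feasibility -/

lemma feas_ne {R : Scenario} {π : List ℕ} (hfe : Feasible R π) : π ≠ [] := hfe.1.1

lemma feas_chain {n : ℕ} {w : ℕ → ℕ → ℚ} {t0 : ℕ} {C : Finset (ℕ × ℕ)} {π : List ℕ}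
    (hfe : Feasible ⟨cycAdj n, w, 1, t0, C⟩ π) :
    ∀ i, i + 1 < π.length → cycAdj n (π.getD i 0) (π.getD (i+1) 0) := by
  intro i hi
  have hch : π.Chain' (cycAdj n) := hfe.1.2
  rw [List.Chain', List.isChain_iff_getElem] at hch
  have := hch i (by omega)
  rw [List.getD_eq_getElem π 0 (by omega : i < π.length),
    List.getD_eq_getElem π 0 (by omega : i + 1 < π.length)]
  simpa [List.get_eq_getElem] using this

lemma feas_head {n : ℕ} {w : ℕ → ℕ → ℚ} {t0 : ℕ} {C : Finset (ℕ × ℕ)} {π : List ℕ}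
    (hfe : Feasible ⟨cycAdj n, w, 1, t0, C⟩ π) : π.getD 0 0 = 1 := by
  have h := hfe.2.1
  cases π with
  | nil => simp at h
  | cons x l => simp_all [List.head?]

lemma feas_last {n : ℕ} {w : ℕ → ℕ → ℚ} {t0 : ℕ} {C : Finset (ℕ × ℕ)} {π : List ℕ}
    (hfe : Feasible ⟨cycAdj n, w, 1, t0, C⟩ π) : π.getD (π.length - 1) 0 = t0 := by
  have h := hfe.2.2.1
  rw [List.getLast?_eq_getElem?] at h
  have hne : π ≠ [] := feas_ne hfe
  have hlen : 0 < π.length := List.length_pos_iff.2 hne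
  rw [List.getElem?_eq_getElem (by omega)] at h
  rw [List.getD_eq_getElem π 0 (by omega)]
  simpa using h

lemma feas_bounds {n : ℕ} {w : ℕ → ℕ → ℚ} {t0 : ℕ} {C : Finset (ℕ × ℕ)} {π : List ℕ}
    (hn : 3 ≤ n) (hfe : Feasible ⟨cycAdj n, w, 1, t0, C⟩ π) :
    ∀ i, i < π.length → 1 ≤ π.getD i 0 ∧ π.getD i 0 ≤ n := by
  intro i hi
  by_cases h2 : i + 1 < π.length
  · have := feas_chain hfe i h2
    exact ⟨this.2.1, this.2.2.1⟩
  · by_cases h1 : 1 ≤ i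
    · have := feas_chain hfe (i-1) (by omega)
      rw [(by omega : i - 1 + 1 = i)] at this
      exact ⟨this.2.2.2.1, this.2.2.2.2⟩
    · -- i = 0 and length = 1
      have hi0 : i = 0 := by omega
      subst hi0
      rw [feas_head hfe]
      omega

/-! ### the surgery lemma -/

lemma not_optimal_of_decomp (n : ℕ) (hn : 3 ≤ n) (w : ℕ → ℕ → ℚ)
    (hw : ∀ a b, 0 < w a b) (t0 : ℕ) (C : Finset (ℕ × ℕ))
    (A' B : List ℕ) (x p : ℕ)
    (hfe : Feasible ⟨cycAdj n, w, 1, t0, C⟩ (A' ++ x :: p :: x :: B))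
    (hnot : p ∉ VC C) :
    ¬ Optimal ⟨cycAdj n, w, 1, t0, C⟩ (A' ++ x :: p :: x :: B) := by
  set L := A'.length with hL
  -- feasibility of the shortened ride
  have hfe' : Feasible ⟨cycAdj n, w, 1, t0, C⟩ (A' ++ x :: B) := by
    obtain ⟨⟨hne, hch⟩, hhead, hlast, hsat⟩ := hfe
    refine ⟨⟨by simp, ?_⟩, ?_, ?_, ?_⟩
    · -- chain
      rw [List.Chain', List.isChain_split] at hch ⊢
      obtain ⟨hch1, hch2⟩ := hch
      exact ⟨hch1, hch2.tail.tail⟩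
    · -- head
      cases A' with
      | nil => simpa using hhead
      | cons z l => simpa using hhead
    · -- last
      cases hBc : B with
      | nil =>
        rw [hBc] at hlast
        have e1 : A' ++ x :: p :: x :: [] = (A' ++ [x, p]) ++ [x] := by simp
        rw [e1, List.getLast?_concat] at hlast
        have e2 : A' ++ x :: ([] : List ℕ) = A' ++ [x] := rfl
        rw [e2, List.getLast?_concat]
        exact hlast
      | cons z l =>
        rw [hBc] at hlast
        have e1 : A' ++ x :: p :: x :: z :: l = (A' ++ [x, p, x]) ++ z :: l := by simp
        rw [e1, List.getLast?_append_of_ne_nil _ (by simp)] at hlast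
        have e2 : A' ++ x :: z :: l = (A' ++ [x]) ++ z :: l := by simp
        rw [e2, List.getLast?_append_of_ne_nil _ (by simp)]
        exact hlast
    · -- requests
      intro r hr
      obtain ⟨i0, j0, hij, hs, ht⟩ := hsat r hr
      have hsVC : r.1 ∈ VC C := Finset.mem_union_left _ (Finset.mem_image.2 ⟨r, hr, rfl⟩)
      have htVC : r.2 ∈ VC C := Finset.mem_union_right _ (Finset.mem_image.2 ⟨r, hr, rfl⟩)
      have hpidx : (A' ++ x :: p :: x :: B)[L+1]? = some p := by
        rw [List.getElem?_append_right (by omega : A'.length ≤ L + 1)]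
        rw [hL]
        rw [(by omega : A'.length + 1 - A'.length = 1)]
        rfl
      have hi0idx : i0 ≠ L + 1 := by
        intro hcon
        rw [hcon, hpidx] at hs
        have : p = r.1 := by injection hs
        rw [this] at hnot
        exact hnot hsVC
      have hj0idx : j0 ≠ L + 1 := by
        intro hcon
        rw [hcon, hpidx] at ht
        have : p = r.2 := by injection ht
        rw [this] at hnot
        exact hnot htVC
      have htrans : ∀ j y, j ≠ L + 1 → (A' ++ x :: p :: x :: B)[j]? = some y →
          (A' ++ x :: B)[if j ≤ L then j else j - 2]? = some y := by
        intro j y hjidx hjy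
        by_cases hj1 : j < L
        · rw [if_pos (by omega)]
          rw [List.getElem?_append_left hj1] at hjy
          rw [List.getElem?_append_left hj1]
          exact hjy
        · by_cases hj2 : j = L
          · subst hj2
            rw [if_pos le_rfl]
            rw [List.getElem?_append_right (le_refl A'.length)] at hjy ⊢
            simpa using hjy
          · by_cases hj3 : j = L + 2
            · subst hj3
              rw [if_neg (by omega), (by omega : L + 2 - 2 = L)]
              rw [List.getElem?_append_right (by omega : A'.length ≤ L + 2)] at hjy
              rw [List.getElem?_append_right (le_refl A'.length)]
              rw [hL, (by omega : A'.length + 2 - A'.length = 2)] at hjy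
              simp only [List.getElem?_cons_succ] at hjy
              simpa using hjy
            · have hj4 : L + 3 ≤ j := by omega
              rw [if_neg (by omega)]
              rw [List.getElem?_append_right (by omega : A'.length ≤ j)] at hjy
              rw [List.getElem?_append_right (by omega : A'.length ≤ j - 2)]
              rw [(by omega : j - (A'.length) = (j - A'.length - 3) + 3)] at hjy
              rw [(by omega : j - 2 - (A'.length) = (j - A'.length - 3) + 1)]
              simp only [List.getElem?_cons_succ] at hjy ⊢
              exact hjy
      refine ⟨(if i0 ≤ L then i0 else i0 - 2), (if j0 ≤ L then j0 else j0 - 2), ?_,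
        htrans i0 r.1 hi0idx hs, htrans j0 r.2 hj0idx ht⟩
      have hi0ne : i0 ≠ L + 1 := hi0idx
      have hj0ne : j0 ≠ L + 1 := hj0idx
      split_ifs <;> omega
  -- cost comparison
  have hcost : cost w (A' ++ x :: p :: x :: B) = cost w (A' ++ x :: B) + w x p + w p x := by
    rw [cost_append_cons w A' x (p :: x :: B), cost_append_cons w A' x B]
    have e1 : cost w (x :: p :: x :: B) = w x p + w p x + cost w (x :: B) := by
      rw [cost, cost]; ring
    rw [e1]
    ring
  intro hopt
  have hle := hopt.2 _ hfe'
  have hxp := hw x p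
  have hpx := hw p x
  simp only at hle
  rw [hcost] at hle
  linarith

set_option maxHeartbeats 1000000 in
lemma not_optimal_of_interior (n : ℕ) (hn : 3 ≤ n) (w : ℕ → ℕ → ℚ)
    (hw : ∀ a b, 0 < w a b) (t0 : ℕ) (C : Finset (ℕ × ℕ)) (π : List ℕ)
    (hfe : Feasible ⟨cycAdj n, w, 1, t0, C⟩ π)
    (idx : ℕ) (h1 : 1 ≤ idx) (h2 : idx + 1 < π.length)
    (heq : π.getD (idx-1) 0 = π.getD (idx+1) 0)
    (hnot : π.getD idx 0 ∉ VC C) :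
    ¬ Optimal ⟨cycAdj n, w, 1, t0, C⟩ π := by
  have hdec : π = π.take (idx-1) ++
      π.getD (idx-1) 0 :: π.getD idx 0 :: π.getD (idx-1) 0 :: π.drop (idx+2) := by
    have d1 := List.drop_eq_getElem_cons (l := π) (by omega : idx - 1 < π.length)
    rw [(by omega : idx - 1 + 1 = idx)] at d1
    have d2 := List.drop_eq_getElem_cons (l := π) (by omega : idx < π.length)
    have d3 := List.drop_eq_getElem_cons (l := π) (by omega : idx + 1 < π.length)
    rw [(by omega : idx + 1 + 1 = idx + 2)] at d3
    have hgE : π[idx + 1]'(by omega) = π[idx - 1]'(by omega : idx - 1 < π.length) := by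
      rw [← List.getD_eq_getElem π 0 (by omega : idx + 1 < π.length),
        ← List.getD_eq_getElem π 0 (by omega : idx - 1 < π.length)]
      exact heq.symm
    rw [List.getD_eq_getElem π 0 (by omega : idx - 1 < π.length),
      List.getD_eq_getElem π 0 (by omega : idx < π.length)]
    conv_lhs => rw [← List.take_append_drop (idx - 1) π]
    rw [d1, d2, d3, hgE]
  rw [hdec] at hfe ⊢
  exact not_optimal_of_decomp n hn w hw t0 C _ _ _ _ hfe hnot


/-! ### universal rides -/

section Universal

variable {n : ℕ} {w : ℕ → ℕ → ℚ}

lemma getD_map_range {α : Type*} (f : ℕ → α) (L i : ℕ) (h : i < L) (d : α) :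
    (((List.range L).map f).getD i d) = f i := by
  rw [List.getD_eq_getElem _ _ (by simpa using h)]
  rw [List.getElem_map, List.getElem_range]

lemma chain'_of_getD (l : List ℕ)
    (h : ∀ i, i + 1 < l.length → cycAdj n (l.getD i 0) (l.getD (i+1) 0)) :
    l.Chain' (cycAdj n) := by
  rw [List.Chain', List.isChain_iff_getElem]
  intro i hi
  have := h i (by omega)
  rw [List.getD_eq_getElem _ _ (by omega : i < l.length),
    List.getD_eq_getElem _ _ (by omega : i + 1 < l.length)] at this
  simpa [List.get_eq_getElem] using this

lemma mod1_succ_adj (hn : 3 ≤ n) (v : ℕ) (hv : 1 ≤ v) :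
    cycAdj n (mod1 n v) (mod1 n (v+1)) := by
  have hnp : 0 < n := by omega
  have hb1 := mod1_bounds hnp v
  have hb2 := mod1_bounds hnp (v+1)
  refine ⟨?_, hb1.1, hb1.2, hb2.1, hb2.2⟩
  have hr : (v - 1) % n < n := Nat.mod_lt _ hnp
  have hv1 : v + 1 - 1 = (v - 1) + 1 := by omega
  by_cases hc : (v - 1) % n + 1 < n
  · left
    have e : (v - 1 + 1) % n = (v - 1) % n + 1 := by
      rw [Nat.add_mod, Nat.mod_eq_of_lt (show (1:ℕ) < n by omega), Nat.mod_eq_of_lt hc]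
    unfold mod1
    rw [hv1, e]
  · right; right; left
    have heq : (v - 1) % n = n - 1 := by omega
    have e : (v - 1 + 1) % n = 0 := by
      rw [Nat.add_mod, Nat.mod_eq_of_lt (show (1:ℕ) < n by omega), heq,
        (by omega : n - 1 + 1 = n), Nat.mod_self]
    unfold mod1
    rw [hv1, e]
    omega

lemma cycAdj_symm {a b : ℕ} (h : cycAdj n a b) : cycAdj n b a := by
  obtain ⟨hor, h1, h2, h3, h4⟩ := h
  exact ⟨by tauto, h3, h4, h1, h2⟩

lemma cost_map_range (w : ℕ → ℕ → ℚ) (f : ℕ → ℕ) (L : ℕ) :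
    cost w ((List.range L).map f) =
      ∑ i ∈ Finset.range (L - 1), w (f i) (f (i+1)) := by
  rw [cost_eq_sum]
  have hlen : ((List.range L).map f).length = L := by simp
  rw [hlen]
  apply Finset.sum_congr rfl
  intro i hi
  rw [Finset.mem_range] at hi
  rw [getD_map_range f L i (by omega), getD_map_range f L (i+1) (by omega)]

lemma sum_wk_asc (x : ℤ) (L : ℕ) :
    ∑ i ∈ Finset.range L, wk n w (x + i) = SI n w x (x + L) := by
  induction L with
  | zero => simp [SI]
  | succ k ih =>
    rw [Finset.sum_range_succ, ih]
    have h1 : SI n w x (x + k) + SI n w (x + k) (x + k + 1) = SI n w x (x + k + 1) :=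
      SI_split (by omega) (by omega)
    rw [SI_single] at h1
    rw [(by push_cast; ring : x + ((k+1 : ℕ) : ℤ) = x + (k:ℤ) + 1), ← h1]

lemma sum_wk_desc (x : ℤ) (L : ℕ) :
    ∑ i ∈ Finset.range L, wk n w (x - i) = SI n w (x - L + 1) (x + 1) := by
  induction L with
  | zero => simp [SI]
  | succ k ih =>
    rw [Finset.sum_range_succ, ih]
    have h1 : SI n w (x - k - 1 + 1) (x - k + 1) + SI n w (x - k + 1) (x + 1) =
        SI n w (x - k - 1 + 1) (x + 1) := SI_split (by omega) (by omega)
    have h2 : SI n w (x - k - 1 + 1) (x - k + 1) = wk n w (x - k) := by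
      rw [(by ring : x - (k:ℤ) - 1 + 1 = x - k), (by ring : x - (k:ℤ) + 1 = x - k + 1)]
      exact SI_single _
    rw [h2] at h1
    rw [(by push_cast; ring : x - ((k+1 : ℕ) : ℤ) + 1 = x - (k:ℤ) - 1 + 1), ← h1]
    ring

end Universal

section URides

variable (n : ℕ) (w : ℕ → ℕ → ℚ) (t0 : ℕ)

def U1 : List ℕ := (List.range (2*n + t0)).map (fun i => mod1 n (i+1))

def f2 : ℕ → ℕ := fun i => if i ≤ 2*n then mod1 n (i+1) else mod1 n (4*n + 1 - i)

def U2 : List ℕ := (List.range (3*n + 2 - t0)).map (f2 n)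

variable {n w t0}

lemma U1_spec (hn : 3 ≤ n) (hw : ∀ a b, 0 < w a b) (hwsym : ∀ a b, w a b = w b a)
    (ht0 : 1 ≤ t0 ∧ t0 ≤ n) (C : Finset (ℕ × ℕ))
    (hC : ∀ r ∈ C, 1 ≤ r.1 ∧ r.1 ≤ n ∧ 1 ≤ r.2 ∧ r.2 ≤ n) :
    Feasible ⟨cycAdj n, w, 1, t0, C⟩ (U1 n t0) ∧
      cost w (U1 n t0) = 2 * Wcyc n w + SI n w 1 t0 ∧
      cw n (U1 n t0) = ((2*n + t0 : ℕ) : ℤ) ∧ acw n (U1 n t0) = 1 := by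
  have hnp : 0 < n := by omega
  have hL : (U1 n t0).length = 2*n + t0 := by simp [U1]
  have hLpos : 0 < 2*n + t0 := by omega
  have hne : U1 n t0 ≠ [] := by
    intro h
    have := hL
    rw [h] at this
    simp at this
    omega
  have hgetD : ∀ i, i < 2*n + t0 → (U1 n t0).getD i 0 = mod1 n (i+1) := by
    intro i hi
    exact getD_map_range _ _ _ hi 0
  have hc : ∀ i, i + 1 < (U1 n t0).length →
      cycAdj n ((U1 n t0).getD i 0) ((U1 n t0).getD (i+1) 0) := by
    intro i hi
    rw [hL] at hi
    rw [hgetD i (by omega), hgetD (i+1) (by omega)]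
    exact mod1_succ_adj hn (i+1) (by omega)
  have hb : ∀ i, i < (U1 n t0).length → 1 ≤ (U1 n t0).getD i 0 ∧ (U1 n t0).getD i 0 ≤ n := by
    intro i hi
    rw [hL] at hi
    rw [hgetD i hi]
    exact mod1_bounds hnp (i+1)
  have hfe : Feasible ⟨cycAdj n, w, 1, t0, C⟩ (U1 n t0) := by
    refine ⟨⟨hne, chain'_of_getD _ hc⟩, ?_, ?_, ?_⟩
    · rw [List.head?_eq_getElem?, List.getElem?_eq_getElem (by rw [hL]; omega)]
      rw [← List.getD_eq_getElem _ 0 (by rw [hL]; omega), hgetD 0 (by omega)]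
      rw [mod1_eq_self 1 le_rfl (by omega)]
    · rw [List.getLast?_eq_getElem?, List.getElem?_eq_getElem (by rw [hL]; omega)]
      rw [← List.getD_eq_getElem _ 0 (by rw [hL]; omega), hL, hgetD (2*n + t0 - 1) (by omega)]
      rw [(by omega : 2*n + t0 - 1 + 1 = t0 + n + n)]
      rw [mod1_add_n hnp _ (by omega), mod1_add_n hnp _ (by omega),
        mod1_eq_self t0 ht0.1 ht0.2]
    · intro r hr
      obtain ⟨hs1, hs2, ht1, ht2⟩ := hC r hr
      refine ⟨r.1 - 1, n + r.2 - 1, by omega, ?_, ?_⟩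
      · rw [List.getElem?_eq_getElem (by rw [hL]; omega)]
        rw [← List.getD_eq_getElem _ 0 (by rw [hL]; omega), hgetD (r.1 - 1) (by omega)]
        rw [(by omega : r.1 - 1 + 1 = r.1), mod1_eq_self r.1 hs1 hs2]
      · rw [List.getElem?_eq_getElem (by rw [hL]; omega)]
        rw [← List.getD_eq_getElem _ 0 (by rw [hL]; omega), hgetD (n + r.2 - 1) (by omega)]
        rw [(by omega : n + r.2 - 1 + 1 = r.2 + n), mod1_add_n hnp _ (by omega),
          mod1_eq_self r.2 ht1 ht2]
  refine ⟨hfe, ?_, ?_⟩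
  · -- cost
    rw [U1, cost_map_range]
    have hterm : ∀ i ∈ Finset.range (2*n + t0 - 1),
        w (mod1 n (i+1)) (mod1 n (i+1+1)) = wk n w (1 + (i:ℤ)) := by
      intro i _
      unfold wk
      rw [(by push_cast; ring : (1 : ℤ) + (i:ℤ) = ((i+1 : ℕ) : ℤ)),
        mod1Z_natCast hnp (i+1) (by omega)]
      rw [(by push_cast; ring : ((i+1 : ℕ) : ℤ) + 1 = ((i+2 : ℕ) : ℤ)),
        mod1Z_natCast hnp (i+2) (by omega)]
    rw [Finset.sum_congr rfl hterm, sum_wk_asc]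
    have e1 : (1 : ℤ) + ((2*n + t0 - 1 : ℕ) : ℤ) = (1 + (n:ℤ)*2) + (t0 - 1) := by
      push_cast; omega
    rw [e1]
    have e2 : SI n w 1 (1 + (n:ℤ)*2) + SI n w (1 + (n:ℤ)*2) (1 + (n:ℤ)*2 + ((t0:ℤ) - 1)) =
        SI n w 1 (1 + (n:ℤ)*2 + ((t0:ℤ) - 1)) := SI_split (by omega) (by omega)
    have h2W := SI_nmul (n := n) (w := w) hnp 2 1
    push_cast at h2W
    have e3 : SI n w (1 + (n:ℤ)*2) (1 + (n:ℤ)*2 + ((t0:ℤ) - 1)) = SI n w 1 t0 := by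
      have s1 : SI n w (1 + (n:ℤ) + n) ((t0:ℤ) + n + n) = SI n w (1 + n) ((t0:ℤ) + n) :=
        SI_shift hnp _ _
      have s2 : SI n w (1 + (n:ℤ)) ((t0:ℤ) + n) = SI n w 1 t0 := SI_shift hnp _ _
      rw [(by ring : 1 + (n:ℤ)*2 = 1 + (n:ℤ) + n),
        (by ring : 1 + (n:ℤ) + n + ((t0:ℤ) - 1) = (t0:ℤ) + n + n - 1 + 1)]
      rw [(by ring : (t0:ℤ) + (n:ℤ) + n - 1 + 1 = (t0:ℤ) + n + n)]
      rw [s1, s2]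
    linarith [e2, h2W, e3]
  · -- cw and acw
    have hsig : tauList n (U1 n t0) = (List.range (2*n + t0)).map (fun i : ℕ => ((i:ℤ) + 1)) := by
      apply tau_eq_of_spec hn hb hc hne
      · simp [U1]
      · intro i hi
        rw [hL] at hi
        rw [getD_map_range _ _ _ hi 0, hgetD i hi]
        rw [(by push_cast; ring : (i:ℤ) + 1 = ((i+1 : ℕ) : ℤ)), mod1Z_natCast hnp _ (by omega)]
      · intro i hi
        rw [hL] at hi
        rw [getD_map_range _ _ _ (by omega : i < 2*n+t0) 0,
          getD_map_range _ _ _ (by omega : i + 1 < 2*n+t0) 0]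
        left; push_cast; ring
      · intro i hi
        rw [hL] at hi
        rw [getD_map_range _ _ _ hi 0]
        omega
      · refine ⟨0, by rw [hL]; omega, ?_⟩
        rw [getD_map_range _ _ _ (by omega) 0]
        omega
    constructor
    · -- cw
      obtain ⟨i, hi, hvi⟩ := cw_mem (n := n) hne
      rw [hL] at hi
      have h1 : (tauList n (U1 n t0)).getD i 0 = (i:ℤ) + 1 := by
        rw [hsig, getD_map_range _ _ _ hi 0]
      have h2 := le_cw (n := n) hne (2*n + t0 - 1) (by rw [hL]; omega)
      rw [hsig, getD_map_range _ _ _ (by omega) 0] at h2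
      rw [← hvi, h1]
      have : ((2*n + t0 - 1 : ℕ) : ℤ) + 1 = ((2*n + t0 : ℕ) : ℤ) := by push_cast; omega
      rw [this] at h2
      omega
    · -- acw
      obtain ⟨i, hi, hvi⟩ := acw_mem (n := n) hne
      rw [hL] at hi
      have h1 : (tauList n (U1 n t0)).getD i 0 = (i:ℤ) + 1 := by
        rw [hsig, getD_map_range _ _ _ hi 0]
      have h2 := acw_le (n := n) hne 0 (by rw [hL]; omega)
      rw [hsig, getD_map_range _ _ _ (by omega) 0] at h2
      rw [← hvi, h1]
      simp at h2
      omega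

end URides


section URides2

variable {n : ℕ} {w : ℕ → ℕ → ℚ} {t0 : ℕ}

lemma U2_spec (hn : 3 ≤ n) (hw : ∀ a b, 0 < w a b) (hwsym : ∀ a b, w a b = w b a)
    (ht0 : 1 ≤ t0 ∧ t0 ≤ n) (C : Finset (ℕ × ℕ))
    (hC : ∀ r ∈ C, 1 ≤ r.1 ∧ r.1 ≤ n ∧ 1 ≤ r.2 ∧ r.2 ≤ n) :
    Feasible ⟨cycAdj n, w, 1, t0, C⟩ (U2 n t0) ∧
      cost w (U2 n t0) = 3 * Wcyc n w - SI n w 1 t0 ∧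
      cw n (U2 n t0) = 2*(n:ℤ) + 1 ∧ acw n (U2 n t0) = 1 := by
  have hnp : 0 < n := by omega
  set L2 := 3*n + 2 - t0 with hL2def
  have hL2 : 2*n + 2 ≤ L2 := by omega
  have hL : (U2 n t0).length = L2 := by simp [U2, hL2def]
  have hne : U2 n t0 ≠ [] := by
    intro h
    have := hL
    rw [h] at this
    simp at this
    omega
  have hf2 : ∀ i, f2 n i = if i ≤ 2*n then mod1 n (i+1) else mod1 n (4*n+1-i) := fun i => rfl
  have hgetD : ∀ i, i < L2 → (U2 n t0).getD i 0 = f2 n i := by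
    intro i hi
    exact getD_map_range _ _ _ hi 0
  have hfasc : ∀ i, i ≤ 2*n → f2 n i = mod1 n (i+1) := by
    intro i hi; rw [hf2, if_pos hi]
  have hfdesc : ∀ i, 2*n < i → f2 n i = mod1 n (4*n+1-i) := by
    intro i hi; rw [hf2, if_neg (by omega)]
  have hfdesc' : ∀ i, 2*n ≤ i → i ≤ 3*n → f2 n i = mod1 n ((4*n - i) + 1) := by
    intro i h1 h2
    by_cases hc : i = 2*n
    · subst hc
      rw [hfasc _ le_rfl, (by omega : 4*n - 2*n + 1 = 2*n + 1)]
    · rw [hfdesc i (by omega), (by omega : 4*n + 1 - i = (4*n - i) + 1)]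
  have hb : ∀ i, i < (U2 n t0).length → 1 ≤ (U2 n t0).getD i 0 ∧ (U2 n t0).getD i 0 ≤ n := by
    intro i hi
    rw [hL] at hi
    rw [hgetD i hi, hf2]
    split_ifs
    · exact mod1_bounds hnp _
    · exact mod1_bounds hnp _
  have hc : ∀ i, i + 1 < (U2 n t0).length →
      cycAdj n ((U2 n t0).getD i 0) ((U2 n t0).getD (i+1) 0) := by
    intro i hi
    rw [hL] at hi
    rw [hgetD i (by omega), hgetD (i+1) (by omega)]
    by_cases h1 : i + 1 ≤ 2*n
    · rw [hfasc i (by omega), hfasc (i+1) h1]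
      exact mod1_succ_adj hn (i+1) (by omega)
    · have h2 : 2*n ≤ i := by omega
      have h3 : i ≤ 3*n - 1 := by omega
      rw [hfdesc' i h2 (by omega), hfdesc (i+1) (by omega),
        (by omega : 4*n + 1 - (i+1) = 4*n - i)]
      apply cycAdj_symm
      have := mod1_succ_adj hn (4*n - i) (by omega)
      rwa [(by omega : 4*n - i + 1 = (4*n - i) + 1)] at this
  have hfe : Feasible ⟨cycAdj n, w, 1, t0, C⟩ (U2 n t0) := by
    refine ⟨⟨hne, chain'_of_getD _ hc⟩, ?_, ?_, ?_⟩
    · rw [List.head?_eq_getElem?, List.getElem?_eq_getElem (by rw [hL]; omega)]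
      rw [← List.getD_eq_getElem _ 0 (by rw [hL]; omega), hgetD 0 (by omega),
        hfasc 0 (by omega), mod1_eq_self 1 le_rfl (by omega)]
    · rw [List.getLast?_eq_getElem?, List.getElem?_eq_getElem (by rw [hL]; omega)]
      rw [← List.getD_eq_getElem _ 0 (by rw [hL]; omega), hL, hgetD (L2 - 1) (by omega),
        hfdesc (L2 - 1) (by omega), (by omega : 4*n + 1 - (L2 - 1) = t0 + n)]
      rw [mod1_add_n hnp _ (by omega), mod1_eq_self t0 ht0.1 ht0.2]
    · intro r hr
      obtain ⟨hs1, hs2, ht1, ht2⟩ := hC r hr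
      refine ⟨r.1 - 1, n + r.2 - 1, by omega, ?_, ?_⟩
      · rw [List.getElem?_eq_getElem (by rw [hL]; omega)]
        rw [← List.getD_eq_getElem _ 0 (by rw [hL]; omega), hgetD (r.1 - 1) (by omega),
          hfasc _ (by omega), (by omega : r.1 - 1 + 1 = r.1), mod1_eq_self r.1 hs1 hs2]
      · rw [List.getElem?_eq_getElem (by rw [hL]; omega)]
        rw [← List.getD_eq_getElem _ 0 (by rw [hL]; omega), hgetD (n + r.2 - 1) (by omega),
          hfasc _ (by omega), (by omega : n + r.2 - 1 + 1 = r.2 + n),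
          mod1_add_n hnp _ (by omega), mod1_eq_self r.2 ht1 ht2]
  refine ⟨hfe, ?_, ?_⟩
  · -- cost
    rw [U2, cost_map_range]
    have hsplit : ∑ i ∈ Finset.Ico 0 (2*n), w (f2 n i) (f2 n (i+1)) +
        ∑ i ∈ Finset.Ico (2*n) (L2 - 1), w (f2 n i) (f2 n (i+1)) =
        ∑ i ∈ Finset.Ico 0 (L2 - 1), w (f2 n i) (f2 n (i+1)) :=
      Finset.sum_Ico_consecutive _ (by omega) (by omega)
    rw [Finset.range_eq_Ico, ← hsplit]
    -- part 1
    have hp1 : ∑ i ∈ Finset.Ico 0 (2*n), w (f2 n i) (f2 n (i+1)) = 2 * Wcyc n w := by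
      rw [← Finset.range_eq_Ico]
      have hterm : ∀ i ∈ Finset.range (2*n),
          w (f2 n i) (f2 n (i+1)) = wk n w (1 + (i:ℤ)) := by
        intro i hi
        rw [Finset.mem_range] at hi
        rw [hfasc i (by omega), hfasc (i+1) (by omega)]
        unfold wk
        rw [(by push_cast; ring : (1 : ℤ) + (i:ℤ) = ((i+1 : ℕ) : ℤ)),
          mod1Z_natCast hnp (i+1) (by omega)]
        rw [(by push_cast; ring : ((i+1 : ℕ) : ℤ) + 1 = ((i+2 : ℕ) : ℤ)),
          mod1Z_natCast hnp (i+2) (by omega)]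
      rw [Finset.sum_congr rfl hterm, sum_wk_asc]
      have h2W := SI_nmul (n := n) (w := w) hnp 2 1
      push_cast at h2W ⊢
      rw [(by ring : (1:ℤ) + (n:ℤ)*2 = 1 + 2*(n:ℤ))] at h2W
      rw [(by ring : (1:ℤ) + 2*(n:ℤ) = 1 + 2*(n:ℤ))]
      exact h2W
    -- part 2
    have hp2 : ∑ i ∈ Finset.Ico (2*n) (L2 - 1), w (f2 n i) (f2 n (i+1)) =
        Wcyc n w - SI n w 1 t0 := by
      have hterm : ∀ i ∈ Finset.Ico (2*n) (L2 - 1),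
          w (f2 n i) (f2 n (i+1)) = wk n w (((4*n - i : ℕ) : ℤ)) := by
        intro i hi
        rw [Finset.mem_Ico] at hi
        rw [hfdesc' i hi.1 (by omega), hfdesc (i+1) (by omega),
          (by omega : 4*n + 1 - (i+1) = 4*n - i)]
        unfold wk
        rw [mod1Z_natCast hnp (4*n - i) (by omega)]
        rw [(by push_cast; omega : ((4*n - i : ℕ) : ℤ) + 1 = ((4*n - i + 1 : ℕ) : ℤ)),
          mod1Z_natCast hnp (4*n - i + 1) (by omega)]
        exact hwsym _ _
      rw [Finset.sum_congr rfl hterm]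
      rw [Finset.sum_Ico_eq_sum_range]
      have hterm2 : ∀ k ∈ Finset.range (L2 - 1 - 2*n),
          wk n w (((4*n - (2*n + k) : ℕ) : ℤ)) = wk n w ((2*(n:ℤ)) - (k:ℤ)) := by
        intro k hk
        rw [Finset.mem_range] at hk
        congr 1
        push_cast
        omega
      rw [Finset.sum_congr rfl hterm2, sum_wk_desc]
      have e1 : (2*(n:ℤ)) - ((L2 - 1 - 2*n : ℕ) : ℤ) + 1 = (t0:ℤ) + n := by
        push_cast
        omega
      rw [e1]
      have s1 : SI n w ((t0:ℤ) + n) (((n:ℤ) + 1) + n) = SI n w t0 ((n:ℤ)+1) :=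
        SI_shift hnp _ _
      rw [(by ring : 2*(n:ℤ) + 1 = ((n:ℤ) + 1) + n), s1]
      have hWsplit : SI n w 1 t0 + SI n w t0 ((n:ℤ)+1) = SI n w 1 ((n:ℤ)+1) :=
        SI_split (by omega) (by omega)
      have hWdef : SI n w 1 ((n:ℤ)+1) = Wcyc n w := by
        unfold Wcyc
        rw [(by ring : (1:ℤ) + (n:ℤ) = (n:ℤ) + 1)]
      linarith
    rw [hp1, hp2]
    ring
  · -- cw and acw
    have hsig : tauList n (U2 n t0) = (List.range L2).map
        (fun i : ℕ => if i ≤ 2*n then ((i:ℤ) + 1) else ((4*n + 1 - i : ℕ) : ℤ)) := by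
      apply tau_eq_of_spec hn hb hc hne
      · simp [U2, hL2def]
      · intro i hi
        rw [hL] at hi
        rw [getD_map_range _ _ _ hi 0, hgetD i hi, hf2]
        split_ifs with hcase
        · rw [(by push_cast; ring : (i:ℤ) + 1 = ((i+1 : ℕ) : ℤ)),
            mod1Z_natCast hnp _ (by omega)]
        · rw [mod1Z_natCast hnp _ (by omega)]
      · intro i hi
        rw [hL] at hi
        rw [getD_map_range _ _ _ (by omega : i < L2) 0,
          getD_map_range _ _ _ (by omega : i + 1 < L2) 0]
        by_cases hc1 : i + 1 ≤ 2*n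
        · rw [if_pos hc1, if_pos (by omega)]
          left; push_cast; ring
        · by_cases hc2 : i ≤ 2*n
          · rw [if_neg hc1, if_pos hc2]
            right
            have : i = 2*n := by omega
            subst this
            push_cast
            omega
          · rw [if_neg hc1, if_neg hc2]
            right
            push_cast
            omega
      · intro i hi
        rw [hL] at hi
        rw [getD_map_range _ _ _ hi 0]
        split_ifs
        · omega
        · push_cast; omega
      · refine ⟨0, by rw [hL]; omega, ?_⟩
        rw [getD_map_range _ _ _ (by omega) 0]
        rw [if_pos (by omega)]
        push_cast; omega
    constructor
    · obtain ⟨i, hi, hvi⟩ := cw_mem (n := n) hne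
      rw [hL] at hi
      have h1 : (tauList n (U2 n t0)).getD i 0 ≤ 2*(n:ℤ) + 1 := by
        rw [hsig, getD_map_range _ _ _ hi 0]
        split_ifs with hcase
        · push_cast; omega
        · push_cast; omega
      have h2 := le_cw (n := n) hne (2*n) (by rw [hL]; omega)
      rw [hsig, getD_map_range _ _ _ (by omega) 0, if_pos le_rfl] at h2
      rw [← hvi]
      push_cast at h2
      omega
    · obtain ⟨i, hi, hvi⟩ := acw_mem (n := n) hne
      rw [hL] at hi
      have h1 : 1 ≤ (tauList n (U2 n t0)).getD i 0 := by
        rw [hsig, getD_map_range _ _ _ hi 0]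
        split_ifs
        · omega
        · push_cast; omega
      have h2 := acw_le (n := n) hne 0 (by rw [hL]; omega)
      rw [hsig, getD_map_range _ _ _ (by omega) 0, if_pos (by omega)] at h2
      rw [← hvi]
      push_cast at h2
      omega

end URides2


/-! ### residues of extremes of optimal rides -/

section Resid

variable {n : ℕ} {w : ℕ → ℕ → ℚ} {t0 : ℕ} {C : Finset (ℕ × ℕ)} {π : List ℕ}

lemma resid_cw (hn : 3 ≤ n) (hw : ∀ a b, 0 < w a b)
    (hopt : Optimal ⟨cycAdj n, w, 1, t0, C⟩ π) :
    mod1Z n (cw n π) ∈ VC C ∪ {1, t0} := by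
  have hfe := hopt.1
  have hne : π ≠ [] := feas_ne hfe
  have hb := feas_bounds hn hfe
  have hcadj := feas_chain hfe
  have hstep := fun i hi => tl_step (n := n) (π := π) hn hb hcadj i hi
  have hPex : ∃ i, i < π.length ∧ (tauList n π).getD i 0 = cw n π := cw_mem hne
  set idx := Nat.find hPex with hidxdef
  have hP := Nat.find_spec hPex
  rw [← hidxdef] at hP
  have hmin : ∀ j, j < idx → ¬(j < π.length ∧ (tauList n π).getD j 0 = cw n π) :=
    fun j hj => Nat.find_min hPex hj
  have hmod : mod1Z n (cw n π) = π.getD idx 0 := by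
    rw [← hP.2, tl_res hn hb idx hP.1]
  rw [hmod]
  by_cases hidx0 : idx = 0
  · apply Finset.mem_union_right
    rw [hidx0, feas_head hfe]
    simp
  by_cases hidxl : idx = π.length - 1
  · apply Finset.mem_union_right
    rw [hidxl, feas_last hfe]
    simp
  -- interior
  have h1 : 1 ≤ idx := by omega
  have h2 : idx + 1 < π.length := by
    have := hP.1
    omega
  have t1 : (tauList n π).getD (idx-1) 0 = cw n π - 1 := by
    have hs := hstep (idx-1) (by omega)
    rw [(by omega : idx - 1 + 1 = idx)] at hs
    have hne1 := hmin (idx-1) (by omega)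
    push_neg at hne1
    have hne1' := hne1 (by omega)
    have hle1 := le_cw (n := n) hne (idx-1) (by omega)
    rcases hs with hs | hs <;> omega
  have t2 : (tauList n π).getD (idx+1) 0 = cw n π - 1 := by
    have hs := hstep idx h2
    have hle1 := le_cw (n := n) hne (idx+1) h2
    rcases hs with hs | hs <;> omega
  have heq : π.getD (idx-1) 0 = π.getD (idx+1) 0 := by
    rw [← tl_res hn hb (idx-1) (by omega), ← tl_res hn hb (idx+1) h2, t1, t2]
  by_contra hnotmem
  have hnot : π.getD idx 0 ∉ VC C := fun h => hnotmem (Finset.mem_union_left _ h)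
  exact not_optimal_of_interior n hn w hw t0 C π hfe idx h1 h2 heq hnot hopt

lemma resid_acw (hn : 3 ≤ n) (hw : ∀ a b, 0 < w a b)
    (hopt : Optimal ⟨cycAdj n, w, 1, t0, C⟩ π) :
    mod1Z n (acw n π) ∈ VC C ∪ {1, t0} := by
  have hfe := hopt.1
  have hne : π ≠ [] := feas_ne hfe
  have hb := feas_bounds hn hfe
  have hcadj := feas_chain hfe
  have hstep := fun i hi => tl_step (n := n) (π := π) hn hb hcadj i hi
  have hPex : ∃ i, i < π.length ∧ (tauList n π).getD i 0 = acw n π := acw_mem hne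
  set idx := Nat.find hPex with hidxdef
  have hP := Nat.find_spec hPex
  rw [← hidxdef] at hP
  have hmin : ∀ j, j < idx → ¬(j < π.length ∧ (tauList n π).getD j 0 = acw n π) :=
    fun j hj => Nat.find_min hPex hj
  have hmod : mod1Z n (acw n π) = π.getD idx 0 := by
    rw [← hP.2, tl_res hn hb idx hP.1]
  rw [hmod]
  by_cases hidx0 : idx = 0
  · apply Finset.mem_union_right
    rw [hidx0, feas_head hfe]
    simp
  by_cases hidxl : idx = π.length - 1
  · apply Finset.mem_union_right
    rw [hidxl, feas_last hfe]
    simp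
  have h1 : 1 ≤ idx := by omega
  have h2 : idx + 1 < π.length := by
    have := hP.1
    omega
  have t1 : (tauList n π).getD (idx-1) 0 = acw n π + 1 := by
    have hs := hstep (idx-1) (by omega)
    rw [(by omega : idx - 1 + 1 = idx)] at hs
    have hne1 := hmin (idx-1) (by omega)
    push_neg at hne1
    have hne1' := hne1 (by omega)
    have hle1 := acw_le (n := n) hne (idx-1) (by omega)
    rcases hs with hs | hs <;> omega
  have t2 : (tauList n π).getD (idx+1) 0 = acw n π + 1 := by
    have hs := hstep idx h2
    have hle1 := acw_le (n := n) hne (idx+1) h2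
    rcases hs with hs | hs <;> omega
  have heq : π.getD (idx-1) 0 = π.getD (idx+1) 0 := by
    rw [← tl_res hn hb (idx-1) (by omega), ← tl_res hn hb (idx+1) h2, t1, t2]
  by_contra hnotmem
  have hnot : π.getD idx 0 ∉ VC C := fun h => hnotmem (Finset.mem_union_left _ h)
  exact not_optimal_of_interior n hn w hw t0 C π hfe idx h1 h2 heq hnot hopt

end Resid

/-! ### extra shift lemma -/

lemma SI_shift_dvd {n : ℕ} {w : ℕ → ℕ → ℚ} (hn : 0 < n) {z : ℤ} (hz : (n:ℤ) ∣ z)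
    (x y : ℤ) : SI n w (x + z) (y + z) = SI n w x y := by
  obtain ⟨c, rfl⟩ := hz
  induction c using Int.induction_on with
  | zero => simp
  | succ i ih =>
    have e1 : (n:ℤ) * ((i:ℤ) + 1) = (n:ℤ) * i + n := by ring
    rw [e1, (by ring : x + ((n:ℤ)*i + n) = (x + (n:ℤ)*i) + n),
      (by ring : y + ((n:ℤ)*i + n) = (y + (n:ℤ)*i) + n), SI_shift hn]
    exact ih
  | pred i ih =>
    have e1 : (n:ℤ) * (-(i:ℤ) - 1) = (n:ℤ) * (-(i:ℤ)) - n := by ring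
    have := SI_shift (n := n) (w := w) hn (x + (n:ℤ) * (-(i:ℤ)) - n) (y + (n:ℤ) * (-(i:ℤ)) - n)
    rw [(by ring : x + (n:ℤ)*(-(i:ℤ)) - n + n = x + (n:ℤ)*(-(i:ℤ))),
      (by ring : y + (n:ℤ)*(-(i:ℤ)) - n + n = y + (n:ℤ)*(-(i:ℤ)))] at this
    rw [e1, (by ring : x + ((n:ℤ)*(-(i:ℤ)) - n) = x + (n:ℤ)*(-(i:ℤ)) - n),
      (by ring : y + ((n:ℤ)*(-(i:ℤ)) - n) = y + (n:ℤ)*(-(i:ℤ)) - n)]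
    rw [← this]
    exact ih


/-- for a cycle scenario (with `s₀ = 1`) admitting an optimal ride,
there exists an optimal ride `π` with `cw(π) ≤ 3n` and both `cw(π) mod n` and
`acw(π) mod n` in `V_C ∪ {s₀,t₀}`. -/
theorem exists_optimal_bounded_winding (n : ℕ) (hn : 3 ≤ n) (w : ℕ → ℕ → ℚ)
    (hwpos : ∀ a b, 0 < w a b) (hwsym : ∀ a b, w a b = w b a)
    (t0 : ℕ) (C : Finset (ℕ × ℕ)) (ht0 : 1 ≤ t0 ∧ t0 ≤ n)
    (hC : ∀ r ∈ C, 1 ≤ r.1 ∧ r.1 ≤ n ∧ 1 ≤ r.2 ∧ r.2 ≤ n)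
    (hex : ∃ π, Optimal ⟨cycAdj n, w, 1, t0, C⟩ π) :
    ∃ π, Optimal ⟨cycAdj n, w, 1, t0, C⟩ π ∧ cw n π ≤ 3 * n ∧
      mod1Z n (cw n π) ∈ VC C ∪ {1, t0} ∧
      mod1Z n (acw n π) ∈ VC C ∪ {1, t0} := by
  have hnp : 0 < n := by omega
  obtain ⟨π0, hopt0⟩ := hex
  by_cases hcw3 : cw n π0 ≤ 3 * (n:ℤ)
  · exact ⟨π0, hopt0, hcw3, resid_cw hn hwpos hopt0, resid_acw hn hwpos hopt0⟩
  · have hfe0 := hopt0.1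
    have hne : π0 ≠ [] := feas_ne hfe0
    have hb := feas_bounds hn hfe0
    have hcadj := feas_chain hfe0
    have hm1 : 1 ≤ acw n π0 := acw_ge_one hn hb hne
    have hmn : acw n π0 ≤ n := acw_le_n hn hb hne
    have hM : 3*(n:ℤ) + 1 ≤ cw n π0 := by omega
    have hlen2 : 2 ≤ π0.length := by
      by_contra h
      push_neg at h
      obtain ⟨i, hi, hv⟩ := cw_mem (n := n) hne
      obtain ⟨j, hj, hv2⟩ := tl_exists_le_n hn hb hne
      have hi0 : i = 0 := by omega
      have hj0 : j = 0 := by omega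
      rw [hi0] at hv
      rw [hj0] at hv2
      omega
    have hresa : mod1Z n ((tauList n π0).getD 0 0) = 1 := by
      rw [tl_res hn hb 0 (by omega), feas_head hfe0]
    have hresb : mod1Z n ((tauList n π0).getD (π0.length - 1) 0) = t0 := by
      rw [tl_res hn hb _ (by omega), feas_last hfe0]
    have hdva : (n:ℤ) ∣ (tauList n π0).getD 0 0 - 1 := by
      have := mod1Z_eq_dvd hnp hresa
      simpa using this
    have hdvb : (n:ℤ) ∣ (tauList n π0).getD (π0.length - 1) 0 - (t0:ℤ) :=
      mod1Z_eq_dvd hnp hresb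
    have hma : acw n π0 ≤ (tauList n π0).getD 0 0 := acw_le hne 0 (by omega)
    have hmb : acw n π0 ≤ (tauList n π0).getD (π0.length - 1) 0 :=
      acw_le hne _ (by omega)
    have haM : (tauList n π0).getD 0 0 ≤ cw n π0 := le_cw hne 0 (by omega)
    have hbM : (tauList n π0).getD (π0.length - 1) 0 ≤ cw n π0 := le_cw hne _ (by omega)
    have hlow := cost_lower hn hwpos hwsym hb hcadj hlen2
    have ht01 : (1:ℤ) ≤ (t0:ℤ) := by exact_mod_cast ht0.1
    have ht0n : (t0:ℤ) ≤ (n:ℤ) := by exact_mod_cast ht0.2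
    have hbig : 2 * Wcyc n w + min (SI n w 1 t0) (Wcyc n w - SI n w 1 t0) ≤ cost w π0 := by
      by_cases hab : (tauList n π0).getD 0 0 ≤ (tauList n π0).getD (π0.length - 1) 0
      · rw [min_eq_left hab, max_eq_right hab] at hlow
        obtain ⟨lam, hlam⟩ : (n:ℤ) ∣ ((tauList n π0).getD (π0.length - 1) 0 -
            (tauList n π0).getD 0 0 - ((t0:ℤ) - 1)) := by
          have e : (tauList n π0).getD (π0.length - 1) 0 - (tauList n π0).getD 0 0 -
              ((t0:ℤ) - 1) = ((tauList n π0).getD (π0.length - 1) 0 - (t0:ℤ)) -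
              ((tauList n π0).getD 0 0 - 1) := by ring
          rw [e]
          exact dvd_sub hdvb hdva
        have hlam0 : 0 ≤ lam := by
          by_contra hneg
          push_neg at hneg
          have hle : lam ≤ -1 := by omega
          have hmul : (n:ℤ) * lam ≤ (n:ℤ) * (-1) :=
            mul_le_mul_of_nonneg_left hle (by positivity)
          omega
        have hcm : lam * (n:ℤ) = (n:ℤ) * lam := mul_comm _ _
        have key := keyIneq n hn w hwpos ((tauList n π0).getD 0 0)
          ((tauList n π0).getD 0 0 - acw n π0)
          (cw n π0 - (tauList n π0).getD (π0.length - 1) 0)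
          ((t0:ℤ) - 1) lam (by omega) (by omega) (by omega) (by omega) hlam0
          (by linarith)
        have e1 : (tauList n π0).getD 0 0 - ((tauList n π0).getD 0 0 - acw n π0) =
            acw n π0 := by ring
        have e2 : (tauList n π0).getD 0 0 + ((t0:ℤ) - 1) + lam * n =
            (tauList n π0).getD (π0.length - 1) 0 := by linarith
        rw [e1, e2] at key
        have e3 : (tauList n π0).getD (π0.length - 1) 0 +
            (cw n π0 - (tauList n π0).getD (π0.length - 1) 0) = cw n π0 := by ring
        rw [e3] at key
        have hd : SI n w ((tauList n π0).getD 0 0)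
            ((tauList n π0).getD 0 0 + ((t0:ℤ) - 1)) = SI n w 1 t0 := by
          have hsd := SI_shift_dvd (n := n) (w := w) hnp hdva 1 t0
          rw [(by ring : (1:ℤ) + ((tauList n π0).getD 0 0 - 1) =
            (tauList n π0).getD 0 0)] at hsd
          rw [(by ring : (t0:ℤ) + ((tauList n π0).getD 0 0 - 1) =
            (tauList n π0).getD 0 0 + ((t0:ℤ) - 1))] at hsd
          exact hsd
        rw [hd] at key
        linarith
      · push_neg at hab
        rw [min_eq_right hab.le, max_eq_left hab.le] at hlow
        obtain ⟨lam, hlam⟩ : (n:ℤ) ∣ ((tauList n π0).getD 0 0 -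
            (tauList n π0).getD (π0.length - 1) 0 - ((n:ℤ) - t0 + 1)) := by
          have e : (tauList n π0).getD 0 0 - (tauList n π0).getD (π0.length - 1) 0 -
              ((n:ℤ) - t0 + 1) = (((tauList n π0).getD 0 0 - 1) -
              ((tauList n π0).getD (π0.length - 1) 0 - (t0:ℤ))) - n := by ring
          rw [e]
          exact dvd_sub (dvd_sub hdva hdvb) (dvd_refl _)
        have hlam0 : 0 ≤ lam := by
          by_contra hneg
          push_neg at hneg
          have hle : lam ≤ -1 := by omega
          have hmul : (n:ℤ) * lam ≤ (n:ℤ) * (-1) :=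
            mul_le_mul_of_nonneg_left hle (by positivity)
          omega
        have hcm : lam * (n:ℤ) = (n:ℤ) * lam := mul_comm _ _
        have key := keyIneq n hn w hwpos ((tauList n π0).getD (π0.length - 1) 0)
          ((tauList n π0).getD (π0.length - 1) 0 - acw n π0)
          (cw n π0 - (tauList n π0).getD 0 0)
          ((n:ℤ) - t0 + 1) lam (by omega) (by omega) (by omega) (by omega) hlam0
          (by linarith)
        have e1 : (tauList n π0).getD (π0.length - 1) 0 -
            ((tauList n π0).getD (π0.length - 1) 0 - acw n π0) = acw n π0 := by ring
        have e2 : (tauList n π0).getD (π0.length - 1) 0 + ((n:ℤ) - t0 + 1) + lam * n =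
            (tauList n π0).getD 0 0 := by linarith
        rw [e1, e2] at key
        have e3 : (tauList n π0).getD 0 0 + (cw n π0 - (tauList n π0).getD 0 0) =
            cw n π0 := by ring
        rw [e3] at key
        have hd2 : SI n w ((tauList n π0).getD (π0.length - 1) 0)
            ((tauList n π0).getD (π0.length - 1) 0 + ((n:ℤ) - t0 + 1)) =
            SI n w t0 ((n:ℤ) + 1) := by
          have hsd := SI_shift_dvd (n := n) (w := w) hnp hdvb (t0:ℤ) ((n:ℤ) + 1)
          rw [(by ring : (t0:ℤ) + ((tauList n π0).getD (π0.length - 1) 0 - (t0:ℤ)) =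
            (tauList n π0).getD (π0.length - 1) 0)] at hsd
          rw [(by ring : ((n:ℤ) + 1) + ((tauList n π0).getD (π0.length - 1) 0 - (t0:ℤ)) =
            (tauList n π0).getD (π0.length - 1) 0 + ((n:ℤ) - t0 + 1))] at hsd
          exact hsd
        have hWd : SI n w 1 t0 + SI n w t0 ((n:ℤ)+1) = Wcyc n w := by
          have := SI_split (n := n) (w := w) (x := 1) (y := (t0:ℤ)) (z := (n:ℤ)+1)
            (by omega) (by omega)
          rw [this]
          unfold Wcyc
          rw [(by ring : (1:ℤ) + (n:ℤ) = (n:ℤ) + 1)]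
        have hq : SI n w ((tauList n π0).getD (π0.length - 1) 0)
            ((tauList n π0).getD (π0.length - 1) 0 + ((n:ℤ) - t0 + 1)) =
            Wcyc n w - SI n w 1 t0 := by linarith
        rw [hq] at key
        have emin : min (Wcyc n w - SI n w 1 t0) (Wcyc n w - (Wcyc n w - SI n w 1 t0)) =
            min (SI n w 1 t0) (Wcyc n w - SI n w 1 t0) := by
          rw [(by ring : Wcyc n w - (Wcyc n w - SI n w 1 t0) = SI n w 1 t0)]
          exact min_comm _ _
        rw [emin] at key
        linarith
    -- choose a universal ride
    by_cases hdmin : SI n w 1 t0 ≤ Wcyc n w - SI n w 1 t0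
    · obtain ⟨hfeU, hcostU, hcwU, hacwU⟩ := U1_spec hn hwpos hwsym ht0 C hC
      have hoptU : Optimal ⟨cycAdj n, w, 1, t0, C⟩ (U1 n t0) := by
        refine ⟨hfeU, fun π' hπ' => ?_⟩
        have h1 := hopt0.2 π' hπ'
        show cost w (U1 n t0) ≤ cost w π'
        rw [hcostU]
        have hmineq : min (SI n w 1 t0) (Wcyc n w - SI n w 1 t0) = SI n w 1 t0 :=
          min_eq_left hdmin
        have h2 : cost w π0 ≤ cost w π' := h1
        linarith [hbig, hmineq.symm.le, hmineq.le]
      refine ⟨U1 n t0, hoptU, ?_, ?_, ?_⟩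
      · rw [hcwU]; push_cast; omega
      · rw [hcwU, mod1Z_natCast hnp _ (by omega),
          (by omega : 2*n + t0 = t0 + n + n), mod1_add_n hnp _ (by omega),
          mod1_add_n hnp _ (by omega), mod1_eq_self t0 ht0.1 ht0.2]
        apply Finset.mem_union_right
        simp
      · rw [hacwU]
        have h1 : mod1Z n (1:ℤ) = 1 := by
          have := mod1Z_coe (n := n) 1 le_rfl (by omega)
          simpa using this
        rw [h1]
        apply Finset.mem_union_right
        simp
    · push_neg at hdmin
      obtain ⟨hfeU, hcostU, hcwU, hacwU⟩ := U2_spec hn hwpos hwsym ht0 C hC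
      have hoptU : Optimal ⟨cycAdj n, w, 1, t0, C⟩ (U2 n t0) := by
        refine ⟨hfeU, fun π' hπ' => ?_⟩
        have h1 := hopt0.2 π' hπ'
        show cost w (U2 n t0) ≤ cost w π'
        rw [hcostU]
        have hmineq : min (SI n w 1 t0) (Wcyc n w - SI n w 1 t0) =
            Wcyc n w - SI n w 1 t0 := min_eq_right hdmin.le
        have h2 : cost w π0 ≤ cost w π' := h1
        linarith [hbig]
      refine ⟨U2 n t0, hoptU, ?_, ?_, ?_⟩
      · rw [hcwU]; push_cast; omega
      · rw [hcwU]
        have e : 2*(n:ℤ) + 1 = ((1 + n + n : ℕ) : ℤ) := by push_cast; ring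
        rw [e, mod1Z_natCast hnp _ (by omega), mod1_add_n hnp _ (by omega),
          mod1_add_n hnp _ (by omega), mod1_eq_self 1 le_rfl (by omega)]
        apply Finset.mem_union_right
        simp
      · rw [hacwU]
        have h1 : mod1Z n (1:ℤ) = 1 := by
          have := mod1Z_coe (n := n) 1 le_rfl (by omega)
          simpa using this
        rw [h1]
        apply Finset.mem_union_right
        simp
end RideSharing
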